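/- arXiv:1804.08160 — 8 statements merged into one kernel-verified Lean document; each statement's English description precedes it below -/
import Mathlib

section
/- Division theorem for echelons (Theorem 1). Let K be a field, n ≥ 1, and < a monomial order on ℕ^n. Let f_1,…,f_k ∈ K[[x_1,…,x_n]] be nonzero power series with initial exponents α_i = in(f_i), and let 0 ≤ s_i ≤ n be assigned scopes. Set A = ⋃_{i=1}^k (α_i + (ℕ^{s_i} × {0}^{n−s_i})) ⊆ ℕ^n. Then for every f ∈ K[[x_1,…,x_n]] there exist power series a_1,…,a_k and b in K[[x_1,…,x_n]] such that: each a_i depends only on x_1,…,x_{s_i}; the support of b is disjoint from A; f = Σ_{i=1}^k a_i·f_i + b; and, if f ≠ b, then in(f − b) = min{ α_i + in(a_i) : 1 ≤ i ≤ k, a_i ≠ 0 } with respect to <. -/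
/- STATEMENT 0: Division theorem for echelons (Theorem 1). -/

open MvPowerSeries



section Aux
variable {K : Type*} [Field K] {n k : ℕ}

theorem ech_wf (lt : (Fin n →₀ ℕ) → (Fin n →₀ ℕ) → Prop)
    (hlt_irrefl : ∀ a, ¬ lt a a)
    (hlt_trans : ∀ a b c, lt a b → lt b c → lt a c)
    (hlt_add : ∀ a b c, lt a b → lt (c + a) (c + b))
    (hlt_zero : ∀ a : Fin n →₀ ℕ, a ≠ 0 → lt 0 a) : WellFounded lt := by
  haveI : IsIrrefl (Fin n →₀ ℕ) lt := ⟨hlt_irrefl⟩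
  haveI : IsTrans (Fin n →₀ ℕ) lt := ⟨hlt_trans⟩
  haveI : IsStrictOrder (Fin n →₀ ℕ) lt := ⟨⟩
  rw [RelEmbedding.wellFounded_iff_isEmpty]
  constructor
  intro g
  obtain ⟨i, j, hij, hle⟩ := ((Set.isPWO_univ_iff (α := Fin n →₀ ℕ)).2 inferInstance).exists_lt (f := g) (fun _ => trivial)
  have h1 : lt (g j) (g i) := g.map_rel_iff.2 hij
  have he : g i + (g j - g i) = g j := add_tsub_cancel_of_le hle
  by_cases h0 : g j - g i = 0
  · rw [h0, add_zero] at he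
    exact hlt_irrefl _ (he ▸ h1)
  · have h2 := hlt_add 0 (g j - g i) (g i) (hlt_zero _ h0)
    rw [add_zero, he] at h2
    exact hlt_irrefl _ (hlt_trans _ _ _ h2 h1)

open Classical in
noncomputable def echIdx (α : Fin k → (Fin n →₀ ℕ)) (s : Fin k → ℕ) (d : Fin n →₀ ℕ) :
    Finset (Fin k) :=
  Finset.univ.filter
    (fun i => ∃ e : Fin n →₀ ℕ, (∀ j : Fin n, s i ≤ (j : ℕ) → e j = 0) ∧ d = α i + e)

open Classical in
noncomputable def echRem (lt : (Fin n →₀ ℕ) → (Fin n →₀ ℕ) → Prop)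
    (G : (Fin n →₀ ℕ) → (Fin k → K) × K) (F : MvPowerSeries (Fin n) K)
    (f : Fin k → MvPowerSeries (Fin n) K) (α : Fin k → (Fin n →₀ ℕ)) (d : Fin n →₀ ℕ) : K :=
  MvPowerSeries.coeff d F - ∑ j : Fin k, ∑ p ∈ Finset.HasAntidiagonal.antidiagonal d,
    if lt (p.1 + α j) d then (G (p.1 + α j)).1 j * MvPowerSeries.coeff p.2 (f j) else 0

lemma echRem_congr {lt : (Fin n →₀ ℕ) → (Fin n →₀ ℕ) → Prop}
    {G₁ G₂ : (Fin n →₀ ℕ) → (Fin k → K) × K} {F : MvPowerSeries (Fin n) K}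
    {f : Fin k → MvPowerSeries (Fin n) K} {α : Fin k → (Fin n →₀ ℕ)} {d : Fin n →₀ ℕ}
    (h : ∀ y, lt y d → G₁ y = G₂ y) :
    echRem lt G₁ F f α d = echRem lt G₂ F f α d := by
  unfold echRem
  congr 1
  refine Finset.sum_congr rfl fun j _ => Finset.sum_congr rfl fun p _ => ?_
  by_cases hp : lt (p.1 + α j) d
  · rw [if_pos hp, if_pos hp, h _ hp]
  · rw [if_neg hp, if_neg hp]

noncomputable def echBody (lt : (Fin n →₀ ℕ) → (Fin n →₀ ℕ) → Prop)
    (F : MvPowerSeries (Fin n) K) (f : Fin k → MvPowerSeries (Fin n) K)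
    (α : Fin k → (Fin n →₀ ℕ)) (s : Fin k → ℕ) (d : Fin n →₀ ℕ)
    (G : (Fin n →₀ ℕ) → (Fin k → K) × K) : (Fin k → K) × K :=
  if h : (echIdx α s d).Nonempty then
    (fun j => if j = (echIdx α s d).min' h then
        echRem lt G F f α d
          / MvPowerSeries.coeff (α ((echIdx α s d).min' h)) (f ((echIdx α s d).min' h))
      else 0, 0)
  else (0, echRem lt G F f α d)

lemma echBody_congr {lt : (Fin n →₀ ℕ) → (Fin n →₀ ℕ) → Prop}
    {F : MvPowerSeries (Fin n) K} {f : Fin k → MvPowerSeries (Fin n) K}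
    {α : Fin k → (Fin n →₀ ℕ)} {s : Fin k → ℕ} {d : Fin n →₀ ℕ}
    {G₁ G₂ : (Fin n →₀ ℕ) → (Fin k → K) × K}
    (h : ∀ y, lt y d → G₁ y = G₂ y) :
    echBody lt F f α s d G₁ = echBody lt F f α s d G₂ := by
  unfold echBody
  have hr : echRem lt G₁ F f α d = echRem lt G₂ F f α d := echRem_congr h
  simp only [hr]

open Classical in
noncomputable def echG (lt : (Fin n →₀ ℕ) → (Fin n →₀ ℕ) → Prop) (hwf : WellFounded lt)
    (F : MvPowerSeries (Fin n) K) (f : Fin k → MvPowerSeries (Fin n) K)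
    (α : Fin k → (Fin n →₀ ℕ)) (s : Fin k → ℕ) : (Fin n →₀ ℕ) → (Fin k → K) × K :=
  hwf.fix fun d prev =>
    echBody lt F f α s d (fun y => if hy : lt y d then prev y hy else 0)

open Classical in
lemma echG_eq (lt : (Fin n →₀ ℕ) → (Fin n →₀ ℕ) → Prop) (hwf : WellFounded lt)
    (F : MvPowerSeries (Fin n) K) (f : Fin k → MvPowerSeries (Fin n) K)
    (α : Fin k → (Fin n →₀ ℕ)) (s : Fin k → ℕ) (d : Fin n →₀ ℕ) :
    echG lt hwf F f α s d = echBody lt F f α s d (echG lt hwf F f α s) := by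
  have h0 := WellFounded.fix_eq hwf
    (fun d prev => echBody lt F f α s d (fun y => if hy : lt y d then prev y hy else 0)) d
  exact h0.trans (echBody_congr (fun y hy => dif_pos hy))

end Aux

theorem echelon_division
    {K : Type*} [Field K] {n k : ℕ} (hn : 1 ≤ n)
    -- a monomial order on ℕ^n : a strict linear order compatible with addition, 0 least
    (lt : (Fin n →₀ ℕ) → (Fin n →₀ ℕ) → Prop)
    (hlt_total : ∀ a b, lt a b ∨ a = b ∨ lt b a)
    (hlt_irrefl : ∀ a, ¬ lt a a)
    (hlt_trans : ∀ a b c, lt a b → lt b c → lt a c)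
    (hlt_add : ∀ a b c, lt a b → lt (c + a) (c + b))
    (hlt_zero : ∀ a : Fin n →₀ ℕ, a ≠ 0 → lt 0 a)
    -- the initial-exponent function associated to the monomial order
    (ini : MvPowerSeries (Fin n) K → (Fin n →₀ ℕ))
    (hini : ∀ F : MvPowerSeries (Fin n) K, F ≠ 0 →
      MvPowerSeries.coeff (ini F) F ≠ 0 ∧
        ∀ d, MvPowerSeries.coeff d F ≠ 0 → ¬ lt d (ini F))
    -- the divisors with their assigned scopes
    (f : Fin k → MvPowerSeries (Fin n) K) (hf : ∀ i, f i ≠ 0)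
    (s : Fin k → ℕ) (hs : ∀ i, s i ≤ n)
    -- the set A = ⋃ᵢ (αᵢ + (ℕ^{sᵢ} × 0^{n-sᵢ}))
    (A : Set (Fin n →₀ ℕ))
    (hA : A = ⋃ i : Fin k,
      {d | ∃ e : Fin n →₀ ℕ, (∀ j : Fin n, s i ≤ (j : ℕ) → e j = 0) ∧ d = ini (f i) + e})
    (F : MvPowerSeries (Fin n) K) :
    ∃ (a : Fin k → MvPowerSeries (Fin n) K) (b : MvPowerSeries (Fin n) K),
      -- each aᵢ depends only on x₁,…,x_{sᵢ}
      (∀ i, ∀ d, MvPowerSeries.coeff d (a i) ≠ 0 → ∀ j : Fin n, s i ≤ (j : ℕ) → d j = 0) ∧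
      -- the support of b is disjoint from A
      (∀ d, MvPowerSeries.coeff d b ≠ 0 → d ∉ A) ∧
      -- the division identity
      F = (∑ i, a i * f i) + b ∧
      -- in(F - b) = min { αᵢ + in(aᵢ) : aᵢ ≠ 0 }
      (F ≠ b →
        (∃ i, a i ≠ 0 ∧ ini (F - b) = ini (f i) + ini (a i)) ∧
        (∀ i, a i ≠ 0 → ¬ lt (ini (f i) + ini (a i)) (ini (F - b)))) := by
  classical
  have hwf : WellFounded lt := ech_wf lt hlt_irrefl hlt_trans hlt_add hlt_zero
  set α : Fin k → (Fin n →₀ ℕ) := fun i => ini (f i) with hα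
  have hαi : ∀ i, α i = ini (f i) := fun i => rfl
  set G : (Fin n →₀ ℕ) → (Fin k → K) × K := echG lt hwf F f α s with hGdef
  set a : Fin k → MvPowerSeries (Fin n) K :=
    (fun i => (fun u => if (∀ j : Fin n, s i ≤ (j : ℕ) → u j = 0) then (G (u + α i)).1 i else 0 :
      MvPowerSeries (Fin n) K)) with hadef
  set b : MvPowerSeries (Fin n) K := (fun d => (G d).2 : MvPowerSeries (Fin n) K) with hbdef
  -- basic coefficient computations
  have hca : ∀ i u, MvPowerSeries.coeff u (a i)
      = if (∀ j : Fin n, s i ≤ (j : ℕ) → u j = 0) then (G (u + α i)).1 i else 0 := by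
    intro i u; rw [hadef]; rfl
  have hcb : ∀ d, MvPowerSeries.coeff d b = (G d).2 := by
    intro d; rw [hbdef]; rfl
  have hGeq : ∀ d, G d = echBody lt F f α s d G := by
    intro d; rw [hGdef]; exact echG_eq lt hwf F f α s d
  have hmem_iff : ∀ (i : Fin k) (d : Fin n →₀ ℕ), i ∈ echIdx α s d ↔
      ∃ e : Fin n →₀ ℕ, (∀ j : Fin n, s i ≤ (j : ℕ) → e j = 0) ∧ d = α i + e := by
    intro i d; simp [echIdx]
  -- the first component of G is zero except at the chosen index
  have hG1 : ∀ d j, (G d).1 j ≠ 0 →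
      ∃ h : (echIdx α s d).Nonempty, j = (echIdx α s d).min' h := by
    intro d j hj
    rw [hGeq d] at hj
    unfold echBody at hj
    by_cases h : (echIdx α s d).Nonempty
    · rw [dif_pos h] at hj
      dsimp only at hj
      refine ⟨h, ?_⟩
      by_contra hne
      rw [if_neg hne] at hj
      exact hj rfl
    · rw [dif_neg h] at hj
      dsimp only at hj
      exact absurd rfl hj
  -- guard removal for coefficients of a
  have hca' : ∀ i u, MvPowerSeries.coeff u (a i) = (G (u + α i)).1 i := by
    intro i u
    rw [hca]
    by_cases hsc : ∀ j : Fin n, s i ≤ (j : ℕ) → u j = 0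
    · rw [if_pos hsc]
    · rw [if_neg hsc]
      by_contra h0
      obtain ⟨hne, him⟩ := hG1 _ _ (Ne.symm h0)
      have hmem : i ∈ echIdx α s (u + α i) := by
        have h2 := Finset.min'_mem (echIdx α s (u + α i)) hne
        rwa [← him] at h2
      obtain ⟨e, he, heq⟩ := (hmem_iff i (u + α i)).1 hmem
      rw [add_comm u (α i)] at heq
      have : u = e := add_left_cancel heq
      exact hsc (this ▸ he)
  have hRdef : ∀ d, echRem lt G F f α d = MvPowerSeries.coeff d F
      - ∑ j : Fin k, ∑ p ∈ Finset.HasAntidiagonal.antidiagonal d,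
          if lt (p.1 + α j) d then (G (p.1 + α j)).1 j * MvPowerSeries.coeff p.2 (f j) else 0 :=
    fun d => rfl
  -- the division identity, coefficientwise
  have hiden : ∀ d, MvPowerSeries.coeff d ((∑ i, a i * f i) + b)
      = MvPowerSeries.coeff d F := by
    intro d
    have hterm : ∀ j : Fin k, ∀ p ∈ Finset.HasAntidiagonal.antidiagonal d,
        MvPowerSeries.coeff p.1 (a j) * MvPowerSeries.coeff p.2 (f j)
        = (if lt (p.1 + α j) d then (G (p.1 + α j)).1 j * MvPowerSeries.coeff p.2 (f j) else 0)
          + (if p.2 = α j then (G d).1 j * MvPowerSeries.coeff (α j) (f j) else 0) := by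
      intro j p hp
      have hpd : p.1 + p.2 = d := Finset.HasAntidiagonal.mem_antidiagonal.mp hp
      rw [hca' j p.1]
      by_cases h2 : p.2 = α j
      · have hd : p.1 + α j = d := by rw [← h2, hpd]
        rw [if_pos h2, if_neg (by rw [hd]; exact hlt_irrefl d), hd, h2, zero_add]
      · rw [if_neg h2, add_zero]
        by_cases h3 : MvPowerSeries.coeff p.2 (f j) = 0
        · rw [h3, mul_zero]
          split_ifs with h4 <;> rfl
        · have h4 : ¬ lt p.2 (α j) := by rw [hαi j]; exact (hini (f j) (hf j)).2 p.2 h3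
          have h5 : lt (α j) p.2 := by
            rcases hlt_total (α j) p.2 with h | h | h
            · exact h
            · exact absurd h.symm h2
            · exact absurd h h4
          have h6 : lt (p.1 + α j) d := by
            rw [← hpd]; exact hlt_add _ _ _ h5
          rw [if_pos h6]
    have hsplit : ∀ j : Fin k, MvPowerSeries.coeff d (a j * f j)
        = (∑ p ∈ Finset.HasAntidiagonal.antidiagonal d,
            if lt (p.1 + α j) d then (G (p.1 + α j)).1 j * MvPowerSeries.coeff p.2 (f j) else 0)
          + (if α j ≤ d then (G d).1 j * MvPowerSeries.coeff (α j) (f j) else 0) := by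
      intro j
      rw [MvPowerSeries.coeff_mul, Finset.sum_congr rfl (hterm j), Finset.sum_add_distrib]
      congr 1
      by_cases hle : α j ≤ d
      · rw [if_pos hle]
        rw [Finset.sum_eq_single ((d - α j, α j) : (Fin n →₀ ℕ) × (Fin n →₀ ℕ))]
        · rw [if_pos rfl]
        · intro p hp hpne
          rw [if_neg]
          intro h2
          apply hpne
          have hpd : p.1 + p.2 = d := Finset.HasAntidiagonal.mem_antidiagonal.mp hp
          have h3 : p.1 + α j = d := by rw [← h2, hpd]
          have h4 : (d - α j) + α j = d := tsub_add_cancel_of_le hle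
          have h5 : p.1 = d - α j := add_right_cancel (h3.trans h4.symm)
          rw [Prod.ext_iff]
          exact ⟨h5, h2⟩
        · intro hnm
          exfalso
          apply hnm
          rw [Finset.HasAntidiagonal.mem_antidiagonal]
          exact tsub_add_cancel_of_le hle
      · rw [if_neg hle]
        apply Finset.sum_eq_zero
        intro p hp
        rw [if_neg]
        intro h2
        apply hle
        have hpd : p.1 + p.2 = d := Finset.HasAntidiagonal.mem_antidiagonal.mp hp
        calc α j ≤ p.1 + α j := le_add_self
          _ = p.1 + p.2 := by rw [h2]
          _ = d := hpd
    rw [map_add, map_sum, Finset.sum_congr rfl (fun j _ => hsplit j), Finset.sum_add_distrib,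
      hcb d]
    rw [hGeq d]
    unfold echBody
    by_cases h : (echIdx α s d).Nonempty
    · rw [dif_pos h]
      dsimp only
      have hm := Finset.min'_mem _ h
      obtain ⟨e, he, hde⟩ := (hmem_iff _ d).1 hm
      have hle : α ((echIdx α s d).min' h) ≤ d :=
        calc α ((echIdx α s d).min' h) ≤ α ((echIdx α s d).min' h) + e := le_self_add
          _ = d := hde.symm
      have hc : MvPowerSeries.coeff (α ((echIdx α s d).min' h))
          (f ((echIdx α s d).min' h)) ≠ 0 := by
        rw [hαi]; exact (hini _ (hf _)).1
      have hdg : (∑ x : Fin k, if α x ≤ d then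
          (if x = (echIdx α s d).min' h then
              echRem lt G F f α d / MvPowerSeries.coeff (α ((echIdx α s d).min' h))
                (f ((echIdx α s d).min' h))
            else 0) * MvPowerSeries.coeff (α x) (f x)
          else 0) = echRem lt G F f α d := by
        rw [Finset.sum_eq_single ((echIdx α s d).min' h)]
        · rw [if_pos hle, if_pos rfl, div_mul_cancel₀ _ hc]
        · intro j _ hjne
          rw [if_neg hjne]
          split_ifs
          · rw [zero_mul]
          · rfl
        · intro hnm
          exact absurd (Finset.mem_univ _) hnm
      rw [hdg, hRdef d]
      ring
    · rw [dif_neg h]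
      dsimp only
      simp only [Pi.zero_apply, zero_mul, ite_self, Finset.sum_const_zero]
      rw [hRdef d]
      ring
  -- order helpers
  have hle_of_not : ∀ x y : Fin n →₀ ℕ, ¬ lt x y → lt y x ∨ y = x := by
    intro x y h
    rcases hlt_total x y with h1 | h1 | h1
    · exact absurd h1 h
    · exact Or.inr h1.symm
    · exact Or.inl h1
  have hLE_add : ∀ x y z w : Fin n →₀ ℕ, (lt x y ∨ x = y) → (lt z w ∨ z = w) →
      (lt (x + z) (y + w) ∨ x + z = y + w) := by
    intro x y z w h1 h2
    rcases h1 with h1 | rfl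
    · rcases h2 with h2 | rfl
      · refine Or.inl (hlt_trans _ _ _ ?_ (hlt_add _ _ _ h2))
        rw [add_comm x z, add_comm y z]
        exact hlt_add _ _ _ h1
      · refine Or.inl ?_
        rw [add_comm x z, add_comm y z]
        exact hlt_add _ _ _ h1
    · rcases h2 with h2 | rfl
      · exact Or.inl (hlt_add _ _ _ h2)
      · exact Or.inr rfl
  have hLTLE_add : ∀ x y z w : Fin n →₀ ℕ, lt x y → (lt z w ∨ z = w) →
      lt (x + z) (y + w) := by
    intro x y z w h1 h2
    rcases h2 with h2 | rfl
    · refine hlt_trans _ _ _ ?_ (hlt_add _ _ _ h2)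
      rw [add_comm x z, add_comm y z]
      exact hlt_add _ _ _ h1
    · rw [add_comm x z, add_comm y z]
      exact hlt_add _ _ _ h1
  have hLE_trans : ∀ x y z : Fin n →₀ ℕ, (lt x y ∨ x = y) → (lt y z ∨ y = z) →
      (lt x z ∨ x = z) := by
    intro x y z h1 h2
    rcases h1 with h1 | rfl
    · rcases h2 with h2 | rfl
      · exact Or.inl (hlt_trans _ _ _ h1 h2)
      · exact Or.inl h1
    · exact h2
  have hLE_antisymm : ∀ x y : Fin n →₀ ℕ, (lt x y ∨ x = y) → (lt y x ∨ y = x) → x = y := by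
    intro x y h1 h2
    rcases h1 with h1 | h1
    · rcases h2 with h2 | h2
      · exact absurd (hlt_trans _ _ _ h1 h2) (hlt_irrefl x)
      · exact h2.symm
    · exact h1
  have hid : F = (∑ i, a i * f i) + b := MvPowerSeries.ext fun d => (hiden d).symm
  refine ⟨a, b, ?_, ?_, hid, ?_⟩
  · intro i d hd j hj
    by_contra hdj
    exact hd (by rw [hca i d]; exact if_neg (fun hg => hdj (hg j hj)))
  · intro d hd
    rw [hA]
    simp only [Set.mem_iUnion, Set.mem_setOf_eq]
    rintro ⟨i, e, he, hde⟩
    apply hd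
    rw [hcb d, hGeq d]
    unfold echBody
    rw [dif_pos ⟨i, (hmem_iff i d).2 ⟨e, he, by rw [hde, hαi]⟩⟩]
  · intro hne
    have hFb : F - b = ∑ i, a i * f i := by
      rw [hid]; exact add_sub_cancel_right _ _
    have hFbne : F - b ≠ 0 := sub_ne_zero_of_ne hne
    have hex : ∃ i, a i ≠ 0 := by
      by_contra hno
      push_neg at hno
      apply hFbne
      rw [hFb]
      exact Finset.sum_eq_zero fun i _ => by rw [hno i, zero_mul]
    set T : Finset (Fin n →₀ ℕ) :=
      (Finset.univ.filter (fun i => a i ≠ 0)).image (fun i => α i + ini (a i)) with hT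
    have hTne : T.Nonempty := by
      obtain ⟨i, hi⟩ := hex
      exact ⟨_, Finset.mem_image_of_mem _ (Finset.mem_filter.mpr ⟨Finset.mem_univ _, hi⟩)⟩
    have hmin : ∀ (T' : Finset (Fin n →₀ ℕ)), T'.Nonempty → ∃ m ∈ T', ∀ x ∈ T', ¬ lt x m := by
      intro T'
      refine Finset.induction_on T' (fun h' => absurd h' (by simp)) ?_
      intro x t hx ih _
      rcases t.eq_empty_or_nonempty with rfl | ht
      · refine ⟨x, Finset.mem_insert_self _ _, ?_⟩
        intro y hy
        rcases Finset.mem_insert.mp hy with rfl | hy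
        · exact hlt_irrefl _
        · exact absurd hy (Finset.notMem_empty _)
      · obtain ⟨m, hm, hmmin⟩ := ih ht
        by_cases hxm : lt x m
        · refine ⟨x, Finset.mem_insert_self _ _, ?_⟩
          intro y hy hlty
          rcases Finset.mem_insert.mp hy with rfl | hy
          · exact hlt_irrefl _ hlty
          · exact hmmin y hy (hlt_trans _ _ _ hlty hxm)
        · refine ⟨m, Finset.mem_insert_of_mem hm, ?_⟩
          intro y hy hlty
          rcases Finset.mem_insert.mp hy with rfl | hy
          · exact hxm hlty
          · exact hmmin y hy hlty
    obtain ⟨μ, hμT, hμmin⟩ := hmin T hTne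
    obtain ⟨i₀, hi₀S, hi₀val⟩ := Finset.mem_image.mp hμT
    have hi₀ne : a i₀ ≠ 0 := (Finset.mem_filter.mp hi₀S).2
    have claimA : ∀ d', lt d' μ → MvPowerSeries.coeff d' (F - b) = 0 := by
      intro d' hd'
      rw [hFb, map_sum]
      refine Finset.sum_eq_zero fun j _ => ?_
      rw [MvPowerSeries.coeff_mul]
      refine Finset.sum_eq_zero fun p hp => ?_
      by_contra h0
      have h1 : MvPowerSeries.coeff p.1 (a j) ≠ 0 := left_ne_zero_of_mul h0
      have h2 : MvPowerSeries.coeff p.2 (f j) ≠ 0 := right_ne_zero_of_mul h0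
      have haj : a j ≠ 0 := fun hz => by rw [hz, map_zero] at h1; exact h1 rfl
      have hjT : α j + ini (a j) ∈ T :=
        Finset.mem_image_of_mem _ (Finset.mem_filter.mpr ⟨Finset.mem_univ _, haj⟩)
      have hμle := hle_of_not _ _ (hμmin _ hjT)
      have hu := hle_of_not _ _ ((hini (a j) haj).2 p.1 h1)
      have hv : lt (α j) p.2 ∨ α j = p.2 :=
        hle_of_not _ _ (by rw [hαi]; exact (hini (f j) (hf j)).2 p.2 h2)
      have hsum := hLE_add _ _ _ _ hv hu
      rw [add_comm p.2 p.1, Finset.HasAntidiagonal.mem_antidiagonal.mp hp] at hsum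
      rcases hLE_trans _ _ _ hμle hsum with h | h
      · exact hlt_irrefl _ (hlt_trans _ _ _ h hd')
      · exact hlt_irrefl _ (h ▸ hd')
    have claimKey : ∀ (j : Fin k) (p : (Fin n →₀ ℕ) × (Fin n →₀ ℕ)),
        p ∈ Finset.HasAntidiagonal.antidiagonal μ →
        MvPowerSeries.coeff p.1 (a j) * MvPowerSeries.coeff p.2 (f j) ≠ 0 →
        p.1 = ini (a j) ∧ p.2 = α j ∧ j = i₀ := by
      intro j p hp h0
      have h1 : MvPowerSeries.coeff p.1 (a j) ≠ 0 := left_ne_zero_of_mul h0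
      have h2 : MvPowerSeries.coeff p.2 (f j) ≠ 0 := right_ne_zero_of_mul h0
      have haj : a j ≠ 0 := fun hz => by rw [hz, map_zero] at h1; exact h1 rfl
      have hjT : α j + ini (a j) ∈ T :=
        Finset.mem_image_of_mem _ (Finset.mem_filter.mpr ⟨Finset.mem_univ _, haj⟩)
      have hμle := hle_of_not _ _ (hμmin _ hjT)
      have hu := hle_of_not _ _ ((hini (a j) haj).2 p.1 h1)
      have hv : lt (α j) p.2 ∨ α j = p.2 :=
        hle_of_not _ _ (by rw [hαi]; exact (hini (f j) (hf j)).2 p.2 h2)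
      have hpsum : p.1 + p.2 = μ := Finset.HasAntidiagonal.mem_antidiagonal.mp hp
      have hsum := hLE_add _ _ _ _ hv hu
      rw [add_comm p.2 p.1, hpsum] at hsum
      have heq : α j + ini (a j) = μ := hLE_antisymm _ _ hsum hμle
      have hp1 : p.1 = ini (a j) := by
        rcases hu with hu' | hu'
        · exfalso
          have hx := hLTLE_add _ _ _ _ hu' hv
          rw [hpsum, add_comm (ini (a j)) (α j), heq] at hx
          exact hlt_irrefl _ hx
        · exact hu'.symm
      have hp2 : p.2 = α j := by
        rcases hv with hv' | hv'
        · exfalso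
          have hx := hLTLE_add _ _ _ _ hv' hu
          rw [add_comm p.2 p.1, hpsum, heq] at hx
          exact hlt_irrefl _ hx
        · exact hv'.symm
      refine ⟨hp1, hp2, ?_⟩
      have hGj : (G μ).1 j ≠ 0 := by
        have hh := h1
        rw [hca' j p.1] at hh
        have hμ1 : p.1 + α j = μ := by rw [hp1, add_comm]; exact heq
        rwa [hμ1] at hh
      have hGi₀ : (G μ).1 i₀ ≠ 0 := by
        have h1' : MvPowerSeries.coeff (ini (a i₀)) (a i₀) ≠ 0 := (hini (a i₀) hi₀ne).1
        rw [hca' i₀ (ini (a i₀))] at h1'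
        have hμ2 : ini (a i₀) + α i₀ = μ := by rw [add_comm]; exact hi₀val
        rwa [hμ2] at h1'
      obtain ⟨hne1, hj1⟩ := hG1 μ j hGj
      obtain ⟨hne2, hj2⟩ := hG1 μ i₀ hGi₀
      rw [hj1, hj2]
    have claimB : MvPowerSeries.coeff μ (F - b) ≠ 0 := by
      rw [hFb, map_sum]
      rw [Finset.sum_eq_single i₀]
      · rw [MvPowerSeries.coeff_mul]
        rw [Finset.sum_eq_single ((ini (a i₀), α i₀) : (Fin n →₀ ℕ) × (Fin n →₀ ℕ))]
        · refine mul_ne_zero (hini (a i₀) hi₀ne).1 ?_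
          rw [hαi]
          exact (hini (f i₀) (hf i₀)).1
        · intro p hp hpne
          by_contra h0
          obtain ⟨e1, e2, _⟩ := claimKey i₀ p hp h0
          exact hpne (by rw [Prod.ext_iff]; exact ⟨e1, e2⟩)
        · intro hnm
          exfalso
          apply hnm
          rw [Finset.HasAntidiagonal.mem_antidiagonal, add_comm]
          exact hi₀val
      · intro j _ hjne
        rw [MvPowerSeries.coeff_mul]
        refine Finset.sum_eq_zero fun p hp => ?_
        by_contra h0
        exact hjne (claimKey j p hp h0).2.2
      · intro hnm
        exact absurd (Finset.mem_univ _) hnm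
    obtain ⟨hδ0, hδmin⟩ := hini (F - b) hFbne
    have h1 : ¬ lt μ (ini (F - b)) := hδmin μ claimB
    have h2 : ¬ lt (ini (F - b)) μ := fun hl => hδ0 (claimA _ hl)
    have hμδ : ini (F - b) = μ := by
      rcases hlt_total μ (ini (F - b)) with h | h | h
      · exact absurd h h1
      · exact h.symm
      · exact absurd h h2
    constructor
    · exact ⟨i₀, hi₀ne, by rw [hμδ, ← hαi i₀]; exact hi₀val.symm⟩
    · intro i hai hlti
      have hiT : α i + ini (a i) ∈ T :=
        Finset.mem_image_of_mem _ (Finset.mem_filter.mpr ⟨Finset.mem_univ _, hai⟩)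
      apply hμmin _ hiT
      rw [hαi i, ← hμδ]
      exact hlti
end

section
/- Uniqueness in echelon division with prescribed partition (Remark (a) to Theorem 1). Let K be a field, < a monomial order on ℕ^n, and f_1,…,f_k ∈ K[[x_1,…,x_n]] nonzero with initial exponents α_i = in(f_i) and assigned scopes 0 ≤ s_i ≤ n. Set A = ⋃_{i=1}^k (α_i + (ℕ^{s_i} × {0}^{n−s_i})) and choose a partition A = A_1 ⊔ … ⊔ A_k with A_i ⊆ α_i + (ℕ^{s_i} × {0}^{n−s_i}) for each i. Then for every f ∈ K[[x_1,…,x_n]] there exist UNIQUE power series a_1,…,a_k, b ∈ K[[x_1,…,x_n]] such that f = Σ_{i=1}^k a_i·f_i + b, the support of b is disjoint from A, and for each i the translated support supp(a_i) + α_i is contained in A_i (in particular each a_i depends only on x_1,…,x_{s_i}). -/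
/- STATEMENT 1: Uniqueness in echelon division with prescribed partition
   (Remark (a) to Theorem 1). -/

open MvPowerSeries

theorem echelon_division_unique
    {K : Type*} [Field K] {n k : ℕ}
    -- a monomial order on ℕ^n : a strict linear order compatible with addition, 0 least
    (lt : (Fin n →₀ ℕ) → (Fin n →₀ ℕ) → Prop)
    (hlt_total : ∀ a b, lt a b ∨ a = b ∨ lt b a)
    (hlt_irrefl : ∀ a, ¬ lt a a)
    (hlt_trans : ∀ a b c, lt a b → lt b c → lt a c)
    (hlt_add : ∀ a b c, lt a b → lt (c + a) (c + b))
    (hlt_zero : ∀ a : Fin n →₀ ℕ, a ≠ 0 → lt 0 a)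
    -- the initial-exponent function associated to the monomial order
    (ini : MvPowerSeries (Fin n) K → (Fin n →₀ ℕ))
    (hini : ∀ F : MvPowerSeries (Fin n) K, F ≠ 0 →
      MvPowerSeries.coeff (ini F) F ≠ 0 ∧
        ∀ d, MvPowerSeries.coeff d F ≠ 0 → ¬ lt d (ini F))
    -- the divisors with their assigned scopes
    (f : Fin k → MvPowerSeries (Fin n) K) (hf : ∀ i, f i ≠ 0)
    (s : Fin k → ℕ) (hs : ∀ i, s i ≤ n)
    -- the set A = ⋃ᵢ (αᵢ + (ℕ^{sᵢ} × 0^{n-sᵢ}))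
    (A : Set (Fin n →₀ ℕ))
    (hA : A = ⋃ i : Fin k,
      {d | ∃ e : Fin n →₀ ℕ, (∀ j : Fin n, s i ≤ (j : ℕ) → e j = 0) ∧ d = ini (f i) + e})
    -- a partition A = A₁ ⊔ ⋯ ⊔ A_k with Aᵢ ⊆ αᵢ + (ℕ^{sᵢ} × 0^{n-sᵢ})
    (APart : Fin k → Set (Fin n →₀ ℕ))
    (hcover : A = ⋃ i : Fin k, APart i)
    (hdisj : ∀ i j : Fin k, i ≠ j → APart i ∩ APart j = ∅)
    (hsub : ∀ i : Fin k, APart i ⊆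
      {d | ∃ e : Fin n →₀ ℕ, (∀ j : Fin n, s i ≤ (j : ℕ) → e j = 0) ∧ d = ini (f i) + e})
    (F : MvPowerSeries (Fin n) K) :
    ∃! p : (Fin k → MvPowerSeries (Fin n) K) × MvPowerSeries (Fin n) K,
      -- the division identity
      F = (∑ i, p.1 i * f i) + p.2 ∧
      -- the support of b is disjoint from A
      (∀ d, MvPowerSeries.coeff d p.2 ≠ 0 → d ∉ A) ∧
      -- supp(aᵢ) + αᵢ ⊆ Aᵢ for every i
      (∀ i, ∀ d, MvPowerSeries.coeff d (p.1 i) ≠ 0 → d + ini (f i) ∈ APart i) := by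
  classical
  -- basic order facts
  have hasymm : ∀ a b, lt a b → ¬ lt b a := fun a b h h' => hlt_irrefl a (hlt_trans a b a h h')
  have hle : ∀ a b : Fin n →₀ ℕ, a ≤ b → a = b ∨ lt a b := by
    intro a b hab
    obtain ⟨c, rfl⟩ := le_iff_exists_add.mp hab
    rcases eq_or_ne c 0 with rfl | hc0
    · exact Or.inl (by simp)
    · exact Or.inr (by simpa using hlt_add 0 c a (hlt_zero c hc0))
  -- the monomial order is well-founded (Dickson's lemma)
  have hwf : WellFounded lt := by
    haveI : IsIrrefl (Fin n →₀ ℕ) lt := ⟨hlt_irrefl⟩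
    haveI : IsTrans (Fin n →₀ ℕ) lt := ⟨hlt_trans⟩
    haveI : IsStrictOrder (Fin n →₀ ℕ) lt := { }
    rw [RelEmbedding.wellFounded_iff_isEmpty]
    constructor
    intro g
    obtain ⟨m, m', hmm', hlee⟩ :=
      wellQuasiOrdered_le (fun i => g i)
    have hdesc : lt (g m') (g m) := g.map_rel_iff.mpr hmm'
    rcases hle _ _ hlee with heq | hlt'
    · exact hlt_irrefl (g m) (heq ▸ hdesc)
    · exact hasymm _ _ hlt' hdesc
  have hc : ∀ i, MvPowerSeries.coeff (ini (f i)) (f i) ≠ 0 := fun i => (hini (f i) (hf i)).1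
  have hfle : ∀ i v, MvPowerSeries.coeff v (f i) ≠ 0 → v = ini (f i) ∨ lt (ini (f i)) v := by
    intro i v hv
    rcases hlt_total v (ini (f i)) with h | h | h
    · exact absurd h ((hini (f i) (hf i)).2 v hv)
    · exact Or.inl h
    · exact Or.inr h
  have hAP_unique : ∀ {i j : Fin k} {d : Fin n →₀ ℕ}, d ∈ APart i → d ∈ APart j → i = j := by
    intro i j d hi hj
    by_contra hij
    exact Set.eq_empty_iff_forall_notMem.mp (hdisj i j hij) d ⟨hi, hj⟩
  have hAPA : ∀ i : Fin k, APart i ⊆ A := by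
    intro i
    rw [hcover]
    exact Set.subset_iUnion APart i
  have hmemA : ∀ {d : Fin n →₀ ℕ}, d ∈ A ↔ ∃ i, d ∈ APart i := by
    intro d
    rw [hcover]
    exact Set.mem_iUnion
  have hAPdec : ∀ i d, d ∈ APart i → ∃ u : Fin n →₀ ℕ, u + ini (f i) = d := by
    intro i d hd
    obtain ⟨e, -, rfl⟩ := hsub i hd
    exact ⟨e, add_comm e (ini (f i))⟩
  -- the quotient-coefficient function, by well-founded recursion on lt
  obtain ⟨G, hG⟩ : ∃ G : (Fin n →₀ ℕ) → K, ∀ d, G d =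
      if h : ∃ j, d ∈ APart j then
        (MvPowerSeries.coeff d F -
          ∑ pr ∈ Finset.HasAntidiagonal.antidiagonal d, ∑ i : Fin k,
            (if pr.1 + ini (f i) ∈ APart i ∧ lt (pr.1 + ini (f i)) d then
                G (pr.1 + ini (f i)) else 0)
              * MvPowerSeries.coeff pr.2 (f i))
          / MvPowerSeries.coeff (ini (f h.choose)) (f h.choose)
      else 0 := by
    refine ⟨hwf.fix (C := fun _ => K) (fun d rec =>
      if h : ∃ j, d ∈ APart j then
        (MvPowerSeries.coeff d F -
          ∑ pr ∈ Finset.HasAntidiagonal.antidiagonal d, ∑ i : Fin k,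
            (if hc2 : pr.1 + ini (f i) ∈ APart i ∧ lt (pr.1 + ini (f i)) d then
                rec (pr.1 + ini (f i)) hc2.2 else 0)
              * MvPowerSeries.coeff pr.2 (f i))
          / MvPowerSeries.coeff (ini (f h.choose)) (f h.choose)
      else 0), fun d => ?_⟩
    conv_lhs => rw [WellFounded.fix_eq]
    rfl
  -- the quotients
  obtain ⟨a, hacoeff⟩ : ∃ a : Fin k → MvPowerSeries (Fin n) K, ∀ i u,
      MvPowerSeries.coeff u (a i) =
        if u + ini (f i) ∈ APart i then G (u + ini (f i)) else 0 :=
    ⟨fun i u => if u + ini (f i) ∈ APart i then G (u + ini (f i)) else 0,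
      fun i u => rfl⟩
  -- the key coefficient identity on A
  have key : ∀ d : Fin n →₀ ℕ, (∃ j, d ∈ APart j) →
      MvPowerSeries.coeff d (∑ i, a i * f i) = MvPowerSeries.coeff d F := by
    intro d hd
    set j := hd.choose with hjdef
    have hj : d ∈ APart j := hd.choose_spec
    obtain ⟨u0, hu0⟩ := hAPdec j d hj
    set T : K := ∑ pr ∈ Finset.HasAntidiagonal.antidiagonal d, ∑ i : Fin k,
        (if pr.1 + ini (f i) ∈ APart i ∧ lt (pr.1 + ini (f i)) d then
            G (pr.1 + ini (f i)) else 0)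
          * MvPowerSeries.coeff pr.2 (f i) with hT
    have hGd : G d * MvPowerSeries.coeff (ini (f j)) (f j) =
        MvPowerSeries.coeff d F - T := by
      rw [hG d, dif_pos hd]
      exact div_mul_cancel₀ _ (hc j)
    have hstep1 : MvPowerSeries.coeff d (∑ i, a i * f i) =
        ∑ pr ∈ Finset.HasAntidiagonal.antidiagonal d, ∑ i : Fin k,
          MvPowerSeries.coeff pr.1 (a i) * MvPowerSeries.coeff pr.2 (f i) := by
      rw [map_sum]
      rw [Finset.sum_comm]
      exact Finset.sum_congr rfl fun i _ => MvPowerSeries.coeff_mul _ _ _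
    -- each non-designated term agrees with the truncated term
    have hterm : ∀ pr ∈ Finset.HasAntidiagonal.antidiagonal d, ∀ i : Fin k,
        ¬(pr = (u0, ini (f j)) ∧ i = j) →
        MvPowerSeries.coeff pr.1 (a i) * MvPowerSeries.coeff pr.2 (f i) -
          (if pr.1 + ini (f i) ∈ APart i ∧ lt (pr.1 + ini (f i)) d then
              G (pr.1 + ini (f i)) else 0)
            * MvPowerSeries.coeff pr.2 (f i) = 0 := by
      rintro ⟨u, v⟩ hpr i hnd
      have huv : u + v = d := Finset.HasAntidiagonal.mem_antidiagonal.mp hpr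
      show MvPowerSeries.coeff u (a i) * MvPowerSeries.coeff v (f i) -
          (if u + ini (f i) ∈ APart i ∧ lt (u + ini (f i)) d then
              G (u + ini (f i)) else 0)
            * MvPowerSeries.coeff v (f i) = 0
      by_cases hm : u + ini (f i) ∈ APart i
      · rw [hacoeff, if_pos hm]
        by_cases hl : lt (u + ini (f i)) d
        · rw [if_pos ⟨hm, hl⟩, sub_self]
        · rw [if_neg (fun hh => hl hh.2), zero_mul, sub_zero]
          by_cases hv : MvPowerSeries.coeff v (f i) = 0
          · rw [hv, mul_zero]
          · exfalso
            rcases hfle i v hv with rfl | hlv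
            · -- v = ini (f i) : then u + ini (f i) = d, forcing the designated term
              have hud : u + ini (f i) = d := huv
              have hij : i = j := hAP_unique (hud ▸ hm) hj
              have huu0 : u = u0 := by
                have h2 : u + ini (f i) = u0 + ini (f i) := by rw [hud, hij, hu0]
                exact add_right_cancel h2
              exact hnd ⟨by rw [huu0, hij], hij⟩
            · exact hl (huv ▸ hlt_add _ _ u hlv)
      · rw [hacoeff, if_neg hm, if_neg (fun hh => hm hh.1)]
        simp
    have hdesg : MvPowerSeries.coeff u0 (a j) *
          MvPowerSeries.coeff (ini (f j)) (f j) -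
        (if u0 + ini (f j) ∈ APart j ∧ lt (u0 + ini (f j)) d then
            G (u0 + ini (f j)) else 0)
          * MvPowerSeries.coeff (ini (f j)) (f j)
        = G d * MvPowerSeries.coeff (ini (f j)) (f j) := by
      rw [hacoeff, hu0, if_pos hj, if_neg (fun hh => hlt_irrefl d hh.2), zero_mul, sub_zero]
    have hsplit : (∑ pr ∈ Finset.HasAntidiagonal.antidiagonal d, ∑ i : Fin k,
        (MvPowerSeries.coeff pr.1 (a i) * MvPowerSeries.coeff pr.2 (f i) -
          (if pr.1 + ini (f i) ∈ APart i ∧ lt (pr.1 + ini (f i)) d then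
              G (pr.1 + ini (f i)) else 0)
            * MvPowerSeries.coeff pr.2 (f i)))
        = G d * MvPowerSeries.coeff (ini (f j)) (f j) := by
      rw [Finset.sum_eq_single_of_mem (u0, ini (f j))
        (Finset.HasAntidiagonal.mem_antidiagonal.mpr hu0)
        (fun pr hpr hne => Finset.sum_eq_zero (fun i _ => hterm pr hpr i (fun hh => hne hh.1)))]
      rw [Finset.sum_eq_single_of_mem j (Finset.mem_univ j)
        (fun i _ hne => hterm (u0, ini (f j)) (Finset.HasAntidiagonal.mem_antidiagonal.mpr hu0) i
          (fun hh => hne hh.2))]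
      exact hdesg
    have : MvPowerSeries.coeff d (∑ i, a i * f i) - T =
        G d * MvPowerSeries.coeff (ini (f j)) (f j) := by
      rw [hstep1, hT, ← Finset.sum_sub_distrib]
      rw [← hsplit]
      exact Finset.sum_congr rfl fun pr _ => (Finset.sum_sub_distrib _ _).symm
    rw [hGd] at this
    exact sub_left_inj.mp this
  -- the remainder
  have hbdef : ∀ d, (∃ j, d ∈ APart j) →
      MvPowerSeries.coeff d (F - ∑ i, a i * f i) = 0 := by
    intro d hd
    rw [map_sub, key d hd, sub_self]
  have hprop : F = (∑ i, a i * f i) + (F - ∑ i, a i * f i) ∧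
      (∀ d, MvPowerSeries.coeff d (F - ∑ i, a i * f i) ≠ 0 → d ∉ A) ∧
      (∀ i, ∀ d, MvPowerSeries.coeff d (a i) ≠ 0 → d + ini (f i) ∈ APart i) := by
    refine ⟨by ring, ?_, ?_⟩
    · intro d hd hdA
      exact hd (hbdef d (hmemA.mp hdA))
    · intro i u hu
      by_contra hm
      rw [hacoeff, if_neg hm] at hu
      exact hu rfl
  -- uniqueness of solutions
  have huniq : ∀ P Q : (Fin k → MvPowerSeries (Fin n) K) × MvPowerSeries (Fin n) K,
      (F = (∑ i, P.1 i * f i) + P.2 ∧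
        (∀ d, MvPowerSeries.coeff d P.2 ≠ 0 → d ∉ A) ∧
        (∀ i, ∀ d, MvPowerSeries.coeff d (P.1 i) ≠ 0 → d + ini (f i) ∈ APart i)) →
      (F = (∑ i, Q.1 i * f i) + Q.2 ∧
        (∀ d, MvPowerSeries.coeff d Q.2 ≠ 0 → d ∉ A) ∧
        (∀ i, ∀ d, MvPowerSeries.coeff d (Q.1 i) ≠ 0 → d + ini (f i) ∈ APart i)) →
      P = Q := by
    rintro ⟨pa, pb⟩ ⟨qa, qb⟩ ⟨hp1, hp2, hp3⟩ ⟨hq1, hq2, hq3⟩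
    have hmem : ∀ (i : Fin k) (u : Fin n →₀ ℕ),
        MvPowerSeries.coeff u (pa i) ≠ MvPowerSeries.coeff u (qa i) →
        u + ini (f i) ∈ APart i := by
      intro i u hne
      rcases eq_or_ne (MvPowerSeries.coeff u (pa i)) 0 with h0 | h0
      · exact hq3 i u (fun h => hne (by rw [h0, h]))
      · exact hp3 i u h0
    set S : Set (Fin n →₀ ℕ) := {d | (∃ i u, u + ini (f i) = d ∧
        MvPowerSeries.coeff u (pa i) ≠ MvPowerSeries.coeff u (qa i)) ∨
        MvPowerSeries.coeff d pb ≠ MvPowerSeries.coeff d qb} with hSdef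
    have hmemS : ∀ d : Fin n →₀ ℕ, d ∈ S ↔ ((∃ i u, u + ini (f i) = d ∧
        MvPowerSeries.coeff u (pa i) ≠ MvPowerSeries.coeff u (qa i)) ∨
        MvPowerSeries.coeff d pb ≠ MvPowerSeries.coeff d qb) := fun d => Iff.rfl
    -- the coefficientwise division identity
    have hEq : ∀ d : Fin n →₀ ℕ,
        (∑ pr ∈ Finset.HasAntidiagonal.antidiagonal d, ∑ i : Fin k,
            MvPowerSeries.coeff pr.1 (pa i) * MvPowerSeries.coeff pr.2 (f i))
          + MvPowerSeries.coeff d pb =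
        (∑ pr ∈ Finset.HasAntidiagonal.antidiagonal d, ∑ i : Fin k,
            MvPowerSeries.coeff pr.1 (qa i) * MvPowerSeries.coeff pr.2 (f i))
          + MvPowerSeries.coeff d qb := by
      intro d
      have hsum : ∀ c : Fin k → MvPowerSeries (Fin n) K,
          MvPowerSeries.coeff d (∑ i, c i * f i) =
          ∑ pr ∈ Finset.HasAntidiagonal.antidiagonal d, ∑ i : Fin k,
            MvPowerSeries.coeff pr.1 (c i) * MvPowerSeries.coeff pr.2 (f i) := by
        intro c
        rw [map_sum, Finset.sum_comm]
        exact Finset.sum_congr rfl fun i _ => MvPowerSeries.coeff_mul _ _ _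
      have h1 : MvPowerSeries.coeff d F =
          MvPowerSeries.coeff d (∑ i, pa i * f i) + MvPowerSeries.coeff d pb := by
        rw [hp1, map_add]
      have h2 : MvPowerSeries.coeff d F =
          MvPowerSeries.coeff d (∑ i, qa i * f i) + MvPowerSeries.coeff d qb := by
        rw [hq1, map_add]
      rw [← hsum pa, ← hsum qa, ← h1, ← h2]
    have hSempty : ∀ d, d ∉ S := by
      by_contra hcon
      push_neg at hcon
      obtain ⟨d0, hd0⟩ := hcon
      have hne : S.Nonempty := ⟨d0, hd0⟩
      set d := hwf.min S hne with hddef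
      have hdS : d ∈ S := hwf.min_mem S hne
      have hmin : ∀ x ∈ S, ¬ lt x d := fun x hx => hwf.not_lt_min S hx
      have hzero_small : ∀ (i : Fin k) (u : Fin n →₀ ℕ), lt (u + ini (f i)) d →
          MvPowerSeries.coeff u (pa i) = MvPowerSeries.coeff u (qa i) := by
        intro i u hltd
        by_contra hne'
        exact hmin _ ((hmemS _).mpr (Or.inl ⟨i, u, rfl, hne'⟩)) hltd
      by_cases hdP : ∃ j, d ∈ APart j
      · obtain ⟨j, hj⟩ := hdP
        obtain ⟨u0, hu0⟩ := hAPdec j d hj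
        have hpb0 : MvPowerSeries.coeff d pb = 0 := by
          by_contra h
          exact hp2 d h (hAPA j hj)
        have hqb0 : MvPowerSeries.coeff d qb = 0 := by
          by_contra h
          exact hq2 d h (hAPA j hj)
        have hte : ∀ pr ∈ Finset.HasAntidiagonal.antidiagonal d, ∀ i : Fin k,
            ¬(pr = (u0, ini (f j)) ∧ i = j) →
            MvPowerSeries.coeff pr.1 (pa i) * MvPowerSeries.coeff pr.2 (f i) -
              MvPowerSeries.coeff pr.1 (qa i) * MvPowerSeries.coeff pr.2 (f i) = 0 := by
          rintro ⟨u, v⟩ hpr i hnd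
          have huv : u + v = d := Finset.HasAntidiagonal.mem_antidiagonal.mp hpr
          show MvPowerSeries.coeff u (pa i) * MvPowerSeries.coeff v (f i) -
              MvPowerSeries.coeff u (qa i) * MvPowerSeries.coeff v (f i) = 0
          by_cases hv : MvPowerSeries.coeff v (f i) = 0
          · rw [hv, mul_zero, mul_zero, sub_self]
          · by_cases hequ : MvPowerSeries.coeff u (pa i) = MvPowerSeries.coeff u (qa i)
            · rw [hequ, sub_self]
            · rcases hfle i v hv with rfl | hlv
              · have hud : u + ini (f i) = d := huv
                have hij : i = j := hAP_unique (hud ▸ hmem i u hequ) hj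
                have huu0 : u = u0 := by
                  have h2 : u + ini (f i) = u0 + ini (f i) := by rw [hud, hij, hu0]
                  exact add_right_cancel h2
                exact absurd ⟨by rw [huu0, hij], hij⟩ hnd
              · exact absurd (hzero_small i u (huv ▸ hlt_add _ _ u hlv)) hequ
        have hsplit : (∑ pr ∈ Finset.HasAntidiagonal.antidiagonal d, ∑ i : Fin k,
              MvPowerSeries.coeff pr.1 (pa i) * MvPowerSeries.coeff pr.2 (f i)) -
            (∑ pr ∈ Finset.HasAntidiagonal.antidiagonal d, ∑ i : Fin k,
              MvPowerSeries.coeff pr.1 (qa i) * MvPowerSeries.coeff pr.2 (f i)) =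
            MvPowerSeries.coeff u0 (pa j) * MvPowerSeries.coeff (ini (f j)) (f j) -
              MvPowerSeries.coeff u0 (qa j) * MvPowerSeries.coeff (ini (f j)) (f j) := by
          rw [← Finset.sum_sub_distrib]
          have hrw : ∀ pr ∈ Finset.HasAntidiagonal.antidiagonal d,
              (∑ i : Fin k, MvPowerSeries.coeff pr.1 (pa i) * MvPowerSeries.coeff pr.2 (f i)) -
              (∑ i : Fin k, MvPowerSeries.coeff pr.1 (qa i) * MvPowerSeries.coeff pr.2 (f i)) =
              ∑ i : Fin k, (MvPowerSeries.coeff pr.1 (pa i) * MvPowerSeries.coeff pr.2 (f i) -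
                MvPowerSeries.coeff pr.1 (qa i) * MvPowerSeries.coeff pr.2 (f i)) :=
            fun pr _ => (Finset.sum_sub_distrib _ _).symm
          rw [Finset.sum_congr rfl hrw]
          rw [Finset.sum_eq_single_of_mem (u0, ini (f j))
            (Finset.HasAntidiagonal.mem_antidiagonal.mpr hu0)
            (fun pr hpr hne' => Finset.sum_eq_zero (fun i _ => hte pr hpr i (fun hh => hne' hh.1)))]
          rw [Finset.sum_eq_single_of_mem j (Finset.mem_univ j)
            (fun i _ hne' => hte (u0, ini (f j)) (Finset.HasAntidiagonal.mem_antidiagonal.mpr hu0) i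
              (fun hh => hne' hh.2))]
        have hSpq : (∑ pr ∈ Finset.HasAntidiagonal.antidiagonal d, ∑ i : Fin k,
              MvPowerSeries.coeff pr.1 (pa i) * MvPowerSeries.coeff pr.2 (f i)) =
            (∑ pr ∈ Finset.HasAntidiagonal.antidiagonal d, ∑ i : Fin k,
              MvPowerSeries.coeff pr.1 (qa i) * MvPowerSeries.coeff pr.2 (f i)) := by
          have := hEq d
          rw [hpb0, hqb0, add_zero, add_zero] at this
          exact this
        have h0 : MvPowerSeries.coeff u0 (pa j) * MvPowerSeries.coeff (ini (f j)) (f j) -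
            MvPowerSeries.coeff u0 (qa j) * MvPowerSeries.coeff (ini (f j)) (f j) = 0 := by
          rw [← hsplit, hSpq, sub_self]
        have hpaqa : MvPowerSeries.coeff u0 (pa j) = MvPowerSeries.coeff u0 (qa j) := by
          rw [← sub_mul] at h0
          exact sub_eq_zero.mp ((mul_eq_zero.mp h0).resolve_right (hc j))
        rcases (hmemS d).mp hdS with ⟨i, u, hud, hne'⟩ | hb
        · have hij : i = j := hAP_unique (hud ▸ hmem i u hne') hj
          have huu0 : u = u0 := by
            have h2 : u + ini (f i) = u0 + ini (f i) := by rw [hud, hij, hu0]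
            exact add_right_cancel h2
          rw [huu0, hij] at hne'
          exact hne' hpaqa
        · exact hb (by rw [hpb0, hqb0])
      · have hdA : d ∉ A := fun h => hdP (hmemA.mp h)
        have hfst : ∀ (i : Fin k) (u : Fin n →₀ ℕ), u + ini (f i) = d →
            MvPowerSeries.coeff u (pa i) = MvPowerSeries.coeff u (qa i) := by
          intro i u hud
          by_contra hne'
          exact hdA (hud ▸ hAPA i (hmem i u hne'))
        have hb : MvPowerSeries.coeff d pb ≠ MvPowerSeries.coeff d qb := by
          rcases (hmemS d).mp hdS with ⟨i, u, hud, hne'⟩ | hb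
          · exact absurd (hfst i u hud) hne'
          · exact hb
        have hSpq : (∑ pr ∈ Finset.HasAntidiagonal.antidiagonal d, ∑ i : Fin k,
              MvPowerSeries.coeff pr.1 (pa i) * MvPowerSeries.coeff pr.2 (f i)) =
            (∑ pr ∈ Finset.HasAntidiagonal.antidiagonal d, ∑ i : Fin k,
              MvPowerSeries.coeff pr.1 (qa i) * MvPowerSeries.coeff pr.2 (f i)) := by
          refine Finset.sum_congr rfl ?_
          rintro ⟨u, v⟩ hpr
          have huv : u + v = d := Finset.HasAntidiagonal.mem_antidiagonal.mp hpr
          refine Finset.sum_congr rfl fun i _ => ?_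
          show MvPowerSeries.coeff u (pa i) * MvPowerSeries.coeff v (f i) =
              MvPowerSeries.coeff u (qa i) * MvPowerSeries.coeff v (f i)
          by_cases hv : MvPowerSeries.coeff v (f i) = 0
          · rw [hv, mul_zero, mul_zero]
          · rcases hfle i v hv with rfl | hlv
            · rw [hfst i u huv]
            · rw [hzero_small i u (huv ▸ hlt_add _ _ u hlv)]
        have := hEq d
        rw [hSpq] at this
        exact hb (add_left_cancel this)
    have h1 : pa = qa := by
      funext i
      apply MvPowerSeries.ext
      intro u
      by_contra hne'
      exact hSempty (u + ini (f i)) ((hmemS _).mpr (Or.inl ⟨i, u, rfl, hne'⟩))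
    have h2 : pb = qb := by
      apply MvPowerSeries.ext
      intro d
      by_contra hne'
      exact hSempty d ((hmemS d).mpr (Or.inr hne'))
    rw [h1, h2]
  exact ⟨⟨a, F - ∑ i, a i * f i⟩, hprop,
    fun q hq => huniq q ⟨a, F - ∑ i, a i * f i⟩ hq hprop⟩
end

section
/- If a K-linear endomorphism strictly raises initial exponents then adding the identity gives an automorphism. Let K be a field and < a monomial order on ℕ^n satisfying condition (#) (every element of ℕ^n has only finitely many <-predecessors). Let T : K[[x_1,…,x_n]] → K[[x_1,…,x_n]] be a K-linear map such that for every nonzero h, either T(h) = 0 or in(T(h)) > in(h). Then Id + T is a K-linear bijection of K[[x_1,…,x_n]] onto itself, with inverse given by the coefficientwise-convergent series Σ_{i≥0} (−T)^i. -/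
/- STATEMENT 2: If a K-linear endomorphism strictly raises initial exponents,
   then adding the identity gives an automorphism, with inverse Σ (−T)^i
   converging coefficientwise. -/

open MvPowerSeries

theorem id_add_initial_raising_is_automorphism
    {K : Type*} [Field K] {n : ℕ}
    -- a monomial order on ℕ^n : a strict linear order compatible with addition, 0 least
    (lt : (Fin n →₀ ℕ) → (Fin n →₀ ℕ) → Prop)
    (hlt_total : ∀ a b, lt a b ∨ a = b ∨ lt b a)
    (hlt_irrefl : ∀ a, ¬ lt a a)
    (hlt_trans : ∀ a b c, lt a b → lt b c → lt a c)
    (hlt_add : ∀ a b c, lt a b → lt (c + a) (c + b))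
    (hlt_zero : ∀ a : Fin n →₀ ℕ, a ≠ 0 → lt 0 a)
    -- condition (#): every element has only finitely many predecessors
    (hfin : ∀ a : Fin n →₀ ℕ, {b : Fin n →₀ ℕ | lt b a}.Finite)
    -- the initial-exponent function associated to the monomial order
    (ini : MvPowerSeries (Fin n) K → (Fin n →₀ ℕ))
    (hini : ∀ F : MvPowerSeries (Fin n) K, F ≠ 0 →
      MvPowerSeries.coeff (R := K) (ini F) F ≠ 0 ∧
        ∀ d, MvPowerSeries.coeff (R := K) d F ≠ 0 → ¬ lt d (ini F))
    -- the K-linear map T strictly raising initial exponents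
    (T : Module.End K (MvPowerSeries (Fin n) K))
    (hT : ∀ h : MvPowerSeries (Fin n) K, h ≠ 0 → T h = 0 ∨ lt (ini h) (ini (T h))) :
    Function.Bijective (fun F : MvPowerSeries (Fin n) K => F + T F) ∧
    ∃ U : Module.End K (MvPowerSeries (Fin n) K),
      (∀ F : MvPowerSeries (Fin n) K, U F + T (U F) = F) ∧
      (∀ F : MvPowerSeries (Fin n) K, U (F + T F) = F) ∧
      -- U is given by the coefficientwise-convergent series Σ_{i≥0} (−T)^i
      (∀ (F : MvPowerSeries (Fin n) K) (d : Fin n →₀ ℕ), ∃ N : ℕ, ∀ m ≥ N,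
        MvPowerSeries.coeff (R := K) d (∑ i ∈ Finset.range m, ((-T) ^ i) F) =
          MvPowerSeries.coeff (R := K) d (U F)) := by
  classical
  set N : (Fin n →₀ ℕ) → ℕ := fun d => (hfin d).toFinset.card + 1 with hNdef
  -- ini of a negation
  have hini_neg : ∀ F : MvPowerSeries (Fin n) K, F ≠ 0 → ini (-F) = ini F := by
    intro F hF
    have hF' : (-F : MvPowerSeries (Fin n) K) ≠ 0 := neg_ne_zero.mpr hF
    obtain ⟨h1, h2⟩ := hini F hF
    obtain ⟨h1', h2'⟩ := hini (-F) hF'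
    have ha : ¬ lt (ini F) (ini (-F)) := by
      apply h2'
      rw [map_neg]
      exact neg_ne_zero.mpr h1
    have hb : ¬ lt (ini (-F)) (ini F) := by
      apply h2
      rw [map_neg, neg_ne_zero] at h1'
      exact h1'
    rcases hlt_total (ini (-F)) (ini F) with h | h | h
    · exact absurd h hb
    · exact h
    · exact absurd h ha
  -- the raising property for -T
  have hT' : ∀ h : MvPowerSeries (Fin n) K, h ≠ 0 →
      (-T) h = 0 ∨ lt (ini h) (ini ((-T) h)) := by
    intro h hh
    rcases hT h hh with h0 | hl
    · left; simp [h0]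
    · by_cases hz : T h = 0
      · left; simp [hz]
      · right
        rw [LinearMap.neg_apply, hini_neg (T h) hz]
        exact hl
  -- key vanishing lemma for any raising endomorphism
  have key : ∀ S : Module.End K (MvPowerSeries (Fin n) K),
      (∀ h : MvPowerSeries (Fin n) K, h ≠ 0 → S h = 0 ∨ lt (ini h) (ini (S h))) →
      ∀ (d : Fin n →₀ ℕ) (F : MvPowerSeries (Fin n) K) (m : ℕ), N d ≤ m →
        MvPowerSeries.coeff (R := K) d ((S ^ m) F) = 0 := by
    intro S hS d F m hm
    by_contra hc
    have hm0 : (S ^ m) F ≠ 0 := by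
      intro h0
      rw [h0, map_zero] at hc
      exact hc rfl
    -- all earlier iterates are nonzero
    have hiter : ∀ k ≤ m, (S ^ k) F ≠ 0 := by
      intro k hk h0
      apply hm0
      obtain ⟨j, rfl⟩ := Nat.exists_eq_add_of_le hk
      rw [add_comm, pow_add, Module.End.mul_apply, h0, map_zero]
    -- strict chain of initial exponents
    have hchain : ∀ k, k + 1 ≤ m → lt (ini ((S ^ k) F)) (ini ((S ^ (k + 1)) F)) := by
      intro k hk
      have hk' : (S ^ k) F ≠ 0 := hiter k (Nat.le_of_succ_le hk)
      have hk1 : (S ^ (k + 1)) F ≠ 0 := hiter (k + 1) hk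
      have : (S ^ (k + 1)) F = S ((S ^ k) F) := by
        rw [pow_succ', Module.End.mul_apply]
      rcases hS ((S ^ k) F) hk' with h0 | hl
      · rw [this] at hk1; exact absurd h0 hk1
      · rw [this]; exact hl
    have hmono : ∀ j k, j < k → k ≤ m → lt (ini ((S ^ j) F)) (ini ((S ^ k) F)) := by
      intro j k hjk hkm
      induction k with
      | zero => omega
      | succ k ih =>
        rcases Nat.lt_or_ge j k with h | h
        · exact hlt_trans _ _ _ (ih h (Nat.le_of_succ_le hkm)) (hchain k hkm)
        · have : j = k := by omega
          subst this
          exact hchain j hkm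
    -- ini (S^m F) is ≤ d
    have hled : ¬ lt d (ini ((S ^ m) F)) := (hini _ hm0).2 d hc
    have hltd : ∀ k < m, lt (ini ((S ^ k) F)) d := by
      intro k hk
      rcases hlt_total (ini ((S ^ m) F)) d with h | h | h
      · exact hlt_trans _ _ _ (hmono k m hk le_rfl) h
      · rw [← h]; exact hmono k m hk le_rfl
      · exact absurd h hled
    -- injection from range m into the finite predecessor set of d
    have hcard : (Finset.range m).card ≤ (hfin d).toFinset.card := by
      apply Finset.card_le_card_of_injOn (fun k => ini ((S ^ k) F))
      · intro k hk
        rw [Finset.mem_coe, Set.Finite.mem_toFinset]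
        exact hltd k (Finset.mem_range.mp hk)
      · intro j hj k hk hjk
        have hjk' : ini ((S ^ j) F) = ini ((S ^ k) F) := hjk
        have hjm : j < m := Finset.mem_range.mp (Finset.mem_coe.mp hj)
        have hkm : k < m := Finset.mem_range.mp (Finset.mem_coe.mp hk)
        by_contra hne
        rcases Nat.lt_or_ge j k with h | h
        · have := hmono j k h (Nat.le_of_lt hkm)
          rw [hjk'] at this
          exact hlt_irrefl _ this
        · have hkj : k < j := by omega
          have := hmono k j hkj (Nat.le_of_lt hjm)
          rw [hjk'] at this
          exact hlt_irrefl _ this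
    rw [Finset.card_range] at hcard
    have : N d ≤ (hfin d).toFinset.card := le_trans hm hcard
    simp only [hNdef] at this
    omega
  have hA : ∀ (d : Fin n →₀ ℕ) (F : MvPowerSeries (Fin n) K) (m : ℕ), N d ≤ m →
      MvPowerSeries.coeff (R := K) d (((-T) ^ m) F) = 0 := key (-T) hT'
  -- the inverse U, defined coefficientwise
  set U : Module.End K (MvPowerSeries (Fin n) K) :=
    { toFun := fun F => fun d => ∑ i ∈ Finset.range (N d),
        MvPowerSeries.coeff (R := K) d (((-T) ^ i) F)
      map_add' := by
        intro F G
        funext d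
        change ∑ i ∈ Finset.range (N d), MvPowerSeries.coeff (R := K) d (((-T) ^ i) (F + G)) =
          (∑ i ∈ Finset.range (N d), MvPowerSeries.coeff (R := K) d (((-T) ^ i) F)) +
          (∑ i ∈ Finset.range (N d), MvPowerSeries.coeff (R := K) d (((-T) ^ i) G))
        rw [← Finset.sum_add_distrib]
        apply Finset.sum_congr rfl
        intro i _
        rw [map_add, map_add]
      map_smul' := by
        intro c F
        funext d
        change ∑ i ∈ Finset.range (N d), MvPowerSeries.coeff (R := K) d (((-T) ^ i) (c • F)) =
          c * ∑ i ∈ Finset.range (N d), MvPowerSeries.coeff (R := K) d (((-T) ^ i) F)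
        rw [Finset.mul_sum]
        apply Finset.sum_congr rfl
        intro i _
        rw [map_smul, map_smul, smul_eq_mul] } with hUdef
  have hUcoeff : ∀ (F : MvPowerSeries (Fin n) K) (d : Fin n →₀ ℕ),
      MvPowerSeries.coeff (R := K) d (U F) = ∑ i ∈ Finset.range (N d),
        MvPowerSeries.coeff (R := K) d (((-T) ^ i) F) := by
    intro F d
    rfl
  -- stabilization of partial sums
  have hstab : ∀ (F : MvPowerSeries (Fin n) K) (d : Fin n →₀ ℕ) (m : ℕ), N d ≤ m →
      MvPowerSeries.coeff (R := K) d (∑ i ∈ Finset.range m, ((-T) ^ i) F) =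
        MvPowerSeries.coeff (R := K) d (U F) := by
    intro F d m hm
    rw [map_sum, hUcoeff]
    symm
    apply Finset.sum_subset (Finset.range_subset_range.mpr hm)
    intro i _ hi
    rw [Finset.mem_range, not_lt] at hi
    exact hA d F i hi
  -- telescoping identity
  have htel : ∀ (G : MvPowerSeries (Fin n) K) (m : ℕ),
      (∑ i ∈ Finset.range m, ((-T) ^ i) G) + T (∑ i ∈ Finset.range m, ((-T) ^ i) G) =
        G - ((-T) ^ m) G := by
    intro G m
    induction m with
    | zero =>
      rw [Finset.range_zero, Finset.sum_empty, map_zero, add_zero, pow_zero,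
        Module.End.one_apply, sub_self]
    | succ m ih =>
      rw [Finset.sum_range_succ, map_add]
      have h1 : T (((-T) ^ m) G) = -(((-T) ^ (m + 1)) G) := by
        rw [pow_succ', Module.End.mul_apply, LinearMap.neg_apply, neg_neg]
      rw [h1, ← sub_eq_add_neg ((T (∑ i ∈ Finset.range m, ((-T) ^ i) G)))]
      rw [add_sub_assoc'] -- ((A+B) + TA) - C
      rw [add_right_comm, ih, sub_add_cancel]
  -- tail vanishing
  have htail : ∀ (R : MvPowerSeries (Fin n) K) (m : ℕ),
      (∀ e, N e ≤ m → MvPowerSeries.coeff (R := K) e R = 0) →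
      ∀ d, N d ≤ m → MvPowerSeries.coeff (R := K) d (T R) = 0 := by
    intro R m hR d hd
    by_cases hR0 : R = 0
    · rw [hR0, map_zero, map_zero]
    rcases hT R hR0 with h0 | hl
    · rw [h0, map_zero]
    by_contra hc
    have hled : ¬ lt d (ini (T R)) := by
      have hTR0 : T R ≠ 0 := by
        intro h
        rw [h, map_zero] at hc
        exact hc rfl
      exact (hini (T R) hTR0).2 d hc
    have hinid : lt (ini R) d := by
      rcases hlt_total (ini (T R)) d with h | h | h
      · exact hlt_trans _ _ _ hl h
      · rw [← h]; exact hl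
      · exact absurd h hled
    have hsub : (hfin (ini R)).toFinset ⊆ (hfin d).toFinset := by
      intro b hb
      rw [Set.Finite.mem_toFinset] at hb ⊢
      exact hlt_trans _ _ _ hb hinid
    have hcard := Finset.card_le_card hsub
    have hNle : N (ini R) ≤ N d := by simp only [hNdef]; omega
    have : ¬ (N (ini R) ≤ m) := by
      intro h
      exact (hini R hR0).1 (hR (ini R) h)
    omega
  -- right inverse property
  have hrinv : ∀ G : MvPowerSeries (Fin n) K, U G + T (U G) = G := by
    intro G
    ext d
    obtain ⟨P, hP⟩ : ∃ P : MvPowerSeries (Fin n) K,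
        P = ∑ i ∈ Finset.range (N d), ((-T) ^ i) G := ⟨_, rfl⟩
    obtain ⟨R, hR⟩ : ∃ R : MvPowerSeries (Fin n) K, R = U G - P := ⟨_, rfl⟩
    have hUG : U G = P + R := by rw [hR, add_sub_cancel]
    have hRtail : ∀ e, N e ≤ N d → MvPowerSeries.coeff (R := K) e R = 0 := by
      intro e he
      rw [hR, hP, map_sub, hstab G e (N d) he, sub_self]
    have hcoeffR : MvPowerSeries.coeff (R := K) d R = 0 := hRtail d le_rfl
    have hcoeffTR : MvPowerSeries.coeff (R := K) d (T R) = 0 := htail R (N d) hRtail d le_rfl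
    have hPT : P + T P = G - ((-T) ^ (N d)) G := by rw [hP]; exact htel G (N d)
    have e1 : U G + T (U G) = (P + T P) + (R + T R) := by
      rw [hUG, map_add, add_add_add_comm]
    rw [e1, hPT, map_add, map_add, map_sub, hA d G (N d) le_rfl, sub_zero,
      hcoeffR, hcoeffTR, add_zero, add_zero]
  -- injectivity
  have hinj : ∀ F G : MvPowerSeries (Fin n) K, F + T F = G + T G → F = G := by
    intro F G h
    by_contra hne
    have hH : F - G ≠ 0 := sub_ne_zero.mpr hne
    have hTH : T (F - G) = -(F - G) := by
      have h1 : (F - G) + T (F - G) = (F + T F) - (G + T G) := by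
        rw [map_sub]; abel
      rw [h, sub_self] at h1
      exact eq_neg_of_add_eq_zero_right h1
    rcases hT (F - G) hH with h0 | hl
    · rw [h0] at hTH
      exact hH (by rw [← neg_neg (F - G), ← hTH, neg_zero])
    · rw [hTH, hini_neg (F - G) hH] at hl
      exact hlt_irrefl _ hl
  refine ⟨⟨fun F G h => hinj F G h, fun G => ⟨U G, hrinv G⟩⟩, U, hrinv, ?_, ?_⟩
  · intro F
    apply hinj
    rw [hrinv (F + T F)]
  · intro F d
    exact ⟨N d, fun m hm => hstab F d m hm⟩
end

section
/- Directness of the Gabrielov echelon: if a, b, c ∈ ℂ[[x,y,z]] are formal power series with a and b depending only on x,y, and a·1 + b·G + c·H = 0, then a = b = c = 0. -/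
/- STATEMENT 5: Directness of the Gabrielov echelon. -/

/-- G = x·(e^z − 1) = x·Σ_{m≥1} z^m/m!  in ℂ[[x,y,z]]. -/
noncomputable def G : MvPowerSeries (Fin 3) ℂ :=
  fun d => if d 0 = 1 ∧ d 1 = 0 ∧ 1 ≤ d 2 then ((Nat.factorial (d 2) : ℂ))⁻¹ else 0

/-- H = y·z − x  in ℂ[[x,y,z]]. -/
noncomputable def H : MvPowerSeries (Fin 3) ℂ :=
  MvPowerSeries.X 1 * MvPowerSeries.X 2 - MvPowerSeries.X 0

/-- A power series in ℂ[[x,y,z]] depends only on x,y if every exponent in its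
support has z-exponent 0. -/
def DependsOnXY (F : MvPowerSeries (Fin 3) ℂ) : Prop :=
  ∀ d : Fin 3 →₀ ℕ, MvPowerSeries.coeff d F ≠ 0 → d 2 = 0

open Finsupp MvPowerSeries Finset

noncomputable def s (p q r : ℕ) : Fin 3 →₀ ℕ :=
  Finsupp.single 0 p + Finsupp.single 1 q + Finsupp.single 2 r

@[simp] lemma s_apply0 (p q r : ℕ) : s p q r 0 = p := by simp [s, Finsupp.single_apply]
@[simp] lemma s_apply1 (p q r : ℕ) : s p q r 1 = q := by simp [s, Finsupp.single_apply]
@[simp] lemma s_apply2 (p q r : ℕ) : s p q r 2 = r := by simp [s, Finsupp.single_apply]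

lemma s_ext (u : Fin 3 →₀ ℕ) (p q r : ℕ) (h0 : u 0 = p) (h1 : u 1 = q) (h2 : u 2 = r) :
    u = s p q r := by
  ext i; fin_cases i <;> simpa [s, Finsupp.single_apply]

lemma s_eq (d : Fin 3 →₀ ℕ) : d = s (d 0) (d 1) (d 2) := s_ext d _ _ _ rfl rfl rfl

lemma s_succ0 (p q r : ℕ) : s (p+1) q r = s p q r + Finsupp.single 0 1 := by
  ext i; fin_cases i <;> simp [s, Finsupp.single_apply]
lemma s_succ1 (p q r : ℕ) : s p (q+1) r = s p q r + Finsupp.single 1 1 := by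
  ext i; fin_cases i <;> simp [s, Finsupp.single_apply]
lemma s_succ2 (p q r : ℕ) : s p q (r+1) = s p q r + Finsupp.single 2 1 := by
  ext i; fin_cases i <;> simp [s, Finsupp.single_apply]

lemma coeff_mul_X' (f : MvPowerSeries (Fin 3) ℂ) (i : Fin 3) (e : Fin 3 →₀ ℕ) :
    MvPowerSeries.coeff (e + Finsupp.single i 1) (f * MvPowerSeries.X i) =
      MvPowerSeries.coeff e f := by
  classical
  rw [MvPowerSeries.coeff_mul, Finset.sum_eq_single (e, Finsupp.single i 1)]
  · rw [MvPowerSeries.coeff_X, if_pos rfl, mul_one]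
  · rintro ⟨u, v⟩ hmem hne
    rw [Finset.HasAntidiagonal.mem_antidiagonal] at hmem
    rw [MvPowerSeries.coeff_X]
    split_ifs with hv
    · exfalso; apply hne
      subst hv
      have hu : u = e := add_right_cancel hmem
      rw [hu]
    · rw [mul_zero]
  · intro habs
    rw [Finset.HasAntidiagonal.mem_antidiagonal] at habs; exact absurd rfl habs

lemma coeff_mul_X_zero (f : MvPowerSeries (Fin 3) ℂ) (i : Fin 3) (e : Fin 3 →₀ ℕ)
    (he : e i = 0) : MvPowerSeries.coeff e (f * MvPowerSeries.X i) = 0 := by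
  classical
  rw [MvPowerSeries.coeff_mul]
  apply Finset.sum_eq_zero
  rintro ⟨u, v⟩ hmem
  rw [Finset.HasAntidiagonal.mem_antidiagonal] at hmem
  rw [MvPowerSeries.coeff_X]
  split_ifs with hv
  · exfalso
    subst hv
    have h2 := congrArg (fun g => g i) hmem
    simp [Finsupp.add_apply, Finsupp.single_apply, he] at h2
  · rw [mul_zero]

lemma coeff_G' (v : Fin 3 →₀ ℕ) :
    MvPowerSeries.coeff v G =
      if v 0 = 1 ∧ v 1 = 0 ∧ 1 ≤ v 2 then ((Nat.factorial (v 2) : ℂ))⁻¹ else 0 := rfl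

lemma coeff_mul_G (b : MvPowerSeries (Fin 3) ℂ) (hb : DependsOnXY b) (p q r : ℕ) :
    MvPowerSeries.coeff (s (p+1) q (r+1)) (b * G) =
      MvPowerSeries.coeff (s p q 0) b * (((r+1).factorial : ℂ))⁻¹ := by
  classical
  rw [MvPowerSeries.coeff_mul, Finset.sum_eq_single (s p q 0, s 1 0 (r+1))]
  · rw [coeff_G']
    simp
  · rintro ⟨u, v⟩ hmem hne
    rw [Finset.HasAntidiagonal.mem_antidiagonal] at hmem
    by_contra hterm
    have hbu : MvPowerSeries.coeff u b ≠ 0 := fun hz => hterm (by simp [hz])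
    have hGv : MvPowerSeries.coeff v G ≠ 0 := fun hz => hterm (by simp [hz])
    rw [coeff_G'] at hGv
    have hvc : v 0 = 1 ∧ v 1 = 0 ∧ 1 ≤ v 2 := by
      by_contra hc; rw [if_neg hc] at hGv; exact hGv rfl
    have hu2 : u 2 = 0 := hb u hbu
    have h0 := congrArg (fun g => g (0 : Fin 3)) hmem
    have h1 := congrArg (fun g => g (1 : Fin 3)) hmem
    have h2 := congrArg (fun g => g (2 : Fin 3)) hmem
    simp only [Finsupp.add_apply] at h0 h1 h2
    rw [hvc.1] at h0; rw [hvc.2.1] at h1; rw [hu2] at h2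
    simp only [s_apply0, s_apply1, s_apply2] at h0 h1 h2
    apply hne
    have hu : u = s p q 0 := s_ext u p q 0 (by omega) (by omega) hu2
    have hv : v = s 1 0 (r+1) := s_ext v 1 0 (r+1) hvc.1 hvc.2.1 (by omega)
    rw [hu, hv]
  · intro habs
    rw [Finset.HasAntidiagonal.mem_antidiagonal] at habs
    exact absurd (by ext i; fin_cases i <;> simp [s, Finsupp.single_apply]) habs

lemma coeff_mul_G_x0 (b : MvPowerSeries (Fin 3) ℂ) (q r : ℕ) :
    MvPowerSeries.coeff (s 0 q r) (b * G) = 0 := by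
  classical
  rw [MvPowerSeries.coeff_mul]
  apply Finset.sum_eq_zero
  rintro ⟨u, v⟩ hmem
  rw [Finset.HasAntidiagonal.mem_antidiagonal] at hmem
  rw [coeff_G']
  split_ifs with hv
  · exfalso
    have h0 := congrArg (fun g => g (0 : Fin 3)) hmem
    simp only [Finsupp.add_apply, s_apply0] at h0
    have hv0 : v 0 = 1 := hv.1
    omega
  · rw [mul_zero]

lemma coeff_cXYZ (c : MvPowerSeries (Fin 3) ℂ) (p q r : ℕ) :
    MvPowerSeries.coeff (s p (q+1) (r+1)) (c * (MvPowerSeries.X 1 * MvPowerSeries.X 2)) =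
      MvPowerSeries.coeff (s p q r) c := by
  rw [← mul_assoc, s_succ2, coeff_mul_X', s_succ1, coeff_mul_X']

lemma coeff_cXYZ_q0 (c : MvPowerSeries (Fin 3) ℂ) (p r : ℕ) :
    MvPowerSeries.coeff (s p 0 r) (c * (MvPowerSeries.X 1 * MvPowerSeries.X 2)) = 0 := by
  rw [← mul_assoc]
  cases r with
  | zero => exact coeff_mul_X_zero _ 2 _ (by simp)
  | succ r =>
    rw [s_succ2, coeff_mul_X']
    exact coeff_mul_X_zero _ 1 _ (by simp)

lemma coeff_cX0 (c : MvPowerSeries (Fin 3) ℂ) (p q r : ℕ) :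
    MvPowerSeries.coeff (s (p+1) q r) (c * MvPowerSeries.X 0) =
      MvPowerSeries.coeff (s p q r) c := by
  rw [s_succ0, coeff_mul_X']

lemma coeff_cX0_p0 (c : MvPowerSeries (Fin 3) ℂ) (q r : ℕ) :
    MvPowerSeries.coeff (s 0 q r) (c * MvPowerSeries.X 0) = 0 :=
  coeff_mul_X_zero _ 0 _ (by simp)

lemma coeff_cH (c : MvPowerSeries (Fin 3) ℂ) (d : Fin 3 →₀ ℕ) :
    MvPowerSeries.coeff d (c * H) =
      MvPowerSeries.coeff d (c * (MvPowerSeries.X 1 * MvPowerSeries.X 2))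
        - MvPowerSeries.coeff d (c * MvPowerSeries.X 0) := by
  rw [H, mul_sub, map_sub]


lemma fact_ratio (r : ℕ) : ∀ p i : ℕ, i ≤ p →
    (r+1+i).factorial * ∏ j ∈ Finset.Ioc i p, (r+1+j) = (r+1+p).factorial := by
  intro p
  induction p with
  | zero => intro i hi; interval_cases i; simp
  | succ p ih =>
    intro i hi
    rcases Nat.lt_or_ge i (p+1) with hlt | hge
    · have hip : i ≤ p := by omega
      rw [Finset.prod_Ioc_succ_top hip, ← mul_assoc, ih i hip]
      rw [show r+1+(p+1) = (r+1+p)+1 by ring, Nat.factorial_succ]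
      ring
    · have : i = p+1 := by omega
      subst this
      simp

lemma IND (p : ℕ) (δ : ℕ → ℂ)
    (hrel : ∀ r : ℕ, ∑ i ∈ Finset.range (p+1), δ i * (((r+1+i).factorial : ℂ))⁻¹ = 0) :
    ∀ i ≤ p, δ i = 0 := by
  classical
  set Q : Polynomial ℂ :=
    ∑ i ∈ Finset.range (p+1), Polynomial.C (δ i) *
      ∏ j ∈ Finset.Ioc i p, (Polynomial.X + Polynomial.C ((j:ℂ)+1)) with hQ
  have hevalnat : ∀ r : ℕ, Q.eval (r : ℂ) = 0 := by
    intro r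
    have : Q.eval (r : ℂ) =
        ∑ i ∈ Finset.range (p+1), δ i * ∏ j ∈ Finset.Ioc i p, ((r:ℂ)+1+j) := by
      rw [hQ, Polynomial.eval_finset_sum]
      apply Finset.sum_congr rfl
      intro i _
      rw [Polynomial.eval_mul, Polynomial.eval_C, Polynomial.eval_prod]
      congr 1
      apply Finset.prod_congr rfl
      intro j _
      rw [Polynomial.eval_add, Polynomial.eval_X, Polynomial.eval_C]
      ring
    rw [this]
    have key : ∀ i ∈ Finset.range (p+1),
        δ i * ∏ j ∈ Finset.Ioc i p, ((r:ℂ)+1+j) =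
        ((r+1+p).factorial : ℂ) * (δ i * (((r+1+i).factorial : ℂ))⁻¹) := by
      intro i hi
      rw [Finset.mem_range] at hi
      have h := fact_ratio r p i (by omega)
      have hc : (((r+1+i).factorial : ℂ)) * (∏ j ∈ Finset.Ioc i p, ((r:ℂ)+1+j)) =
          ((r+1+p).factorial : ℂ) := by
        rw [← h]
        push_cast
        ring
      have hne : (((r+1+i).factorial : ℂ)) ≠ 0 := by
        exact_mod_cast Nat.cast_ne_zero.mpr (Nat.factorial_ne_zero _)
      field_simp
      rw [← hc]
      ring
    rw [Finset.sum_congr rfl key, ← Finset.mul_sum, hrel r, mul_zero]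
  have hQ0 : Q = 0 := by
    apply Polynomial.eq_zero_of_infinite_isRoot
    exact Set.infinite_of_injective_forall_mem (f := fun n : ℕ => (n : ℂ))
      (fun m n hmn => Nat.cast_injective hmn) (fun n => hevalnat n)
  -- now evaluate at -(1+i)
  have heval : ∀ i₀ ≤ p, (∀ i', i₀ < i' → i' ≤ p → δ i' = 0) → δ i₀ = 0 := by
    intro i₀ hi₀ hgt
    have h0 : Q.eval (-(1+(i₀:ℂ))) = 0 := by rw [hQ0]; simp
    rw [hQ] at h0
    simp only [Polynomial.eval_finset_sum, Polynomial.eval_mul, Polynomial.eval_C,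
      Polynomial.eval_prod, Polynomial.eval_add, Polynomial.eval_X] at h0
    rw [Finset.sum_eq_single i₀] at h0
    · have hprodne : (∏ j ∈ Finset.Ioc i₀ p, (-(1+(i₀:ℂ)) + ((j:ℂ)+1))) ≠ 0 := by
        rw [Finset.prod_ne_zero_iff]
        intro j hj
        rw [Finset.mem_Ioc] at hj
        have : (j:ℂ) ≠ (i₀:ℂ) := by
          exact_mod_cast fun hh => (by omega : j ≠ i₀) (Nat.cast_injective hh)
        intro hc
        apply this
        linear_combination hc
      rcases mul_eq_zero.mp h0 with h | h
      · exact h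
      · exact absurd h hprodne
    · intro i hi hne
      rw [Finset.mem_range] at hi
      rcases Nat.lt_or_ge i i₀ with hlt | hge
      · -- product contains factor at j = i₀ which is zero
        have : (∏ j ∈ Finset.Ioc i p, (-(1+(i₀:ℂ)) + ((j:ℂ)+1))) = 0 := by
          apply Finset.prod_eq_zero (i := i₀)
          · rw [Finset.mem_Ioc]; omega
          · ring
        rw [this, mul_zero]
      · have : i₀ < i := by omega
        rw [hgt i this (by omega), zero_mul]
    · intro habs
      exact absurd (Finset.mem_range.mpr (by omega)) habs
  -- downward induction
  have main : ∀ m, ∀ i ≤ p, p - i < m → δ i = 0 := by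
    intro m
    induction m with
    | zero => intro i _ h; omega
    | succ m ih =>
      intro i hi hlt
      apply heval i hi
      intro i' hi'1 hi'2
      exact ih i' hi'2 (by omega)
  intro i hi
  exact main (p - i + 1) i hi (by omega)

theorem gabrielov_echelon_direct
    (a b c : MvPowerSeries (Fin 3) ℂ)
    (ha : DependsOnXY a) (hb : DependsOnXY b)
    (h : a * 1 + b * G + c * H = 0) :
    a = 0 ∧ b = 0 ∧ c = 0 := by
  classical
  set β : ℕ → ℕ → ℂ := fun p q => MvPowerSeries.coeff (s p q 0) b with hβdef
  set γ : ℕ → ℕ → ℕ → ℂ := fun p q r => MvPowerSeries.coeff (s p q r) c with hγdef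
  have hco : ∀ p q r : ℕ,
      MvPowerSeries.coeff (s p q (r+1)) (b * G)
        + MvPowerSeries.coeff (s p q (r+1)) (c * H) = 0 := by
    intro p q r
    have h1 := congrArg (MvPowerSeries.coeff (s p q (r+1))) h
    rw [map_zero, map_add, map_add, mul_one] at h1
    have ha0 : MvPowerSeries.coeff (s p q (r+1)) a = 0 := by
      by_contra hne
      have := ha _ hne
      simp at this
    rw [ha0, zero_add] at h1
    exact h1
  have EqA : ∀ q r : ℕ, γ 0 q r = 0 := by
    intro q r
    have h1 := hco 0 (q+1) r
    rw [coeff_mul_G_x0, coeff_cH, coeff_cXYZ, coeff_cX0_p0] at h1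
    simpa using h1
  have EqB : ∀ p q r : ℕ,
      β p (q+1) * (((r+1).factorial : ℂ))⁻¹ + (γ (p+1) q r - γ p (q+1) (r+1)) = 0 := by
    intro p q r
    have h1 := hco (p+1) (q+1) r
    rw [coeff_mul_G b hb, coeff_cH, coeff_cXYZ, coeff_cX0] at h1
    exact h1
  have EqC : ∀ p r : ℕ, β p 0 * (((r+1).factorial : ℂ))⁻¹ - γ p 0 (r+1) = 0 := by
    intro p r
    have h1 := hco (p+1) 0 r
    rw [coeff_mul_G b hb, coeff_cH, coeff_cXYZ_q0, coeff_cX0] at h1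
    rw [zero_sub] at h1
    linear_combination h1
  have F : ∀ p q r : ℕ,
      γ p q r = -∑ j ∈ Finset.range p, β (p-1-j) (q+1+j) * (((r+1+j).factorial : ℂ))⁻¹ := by
    intro p
    induction p with
    | zero => intro q r; simpa using EqA q r
    | succ p ih =>
      intro q r
      have hB := EqB p q r
      have hI := ih (q+1) (r+1)
      rw [Finset.sum_range_succ']
      have hsum : ∑ i ∈ Finset.range p,
            β (p+1-1-(i+1)) (q+1+(i+1)) * (((r+1+(i+1)).factorial : ℂ))⁻¹
          = ∑ i ∈ Finset.range p,
            β (p-1-i) (q+1+1+i) * (((r+1+1+i).factorial : ℂ))⁻¹ :=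
        Finset.sum_congr rfl (fun i _ => by
          rw [show p+1-1-(i+1) = p-1-i from by omega,
            show q+1+(i+1) = q+1+1+i from by omega,
            show r+1+(i+1) = r+1+1+i from by omega])
      rw [hsum, show p+1-1-0 = p from by omega]
      simp only [Nat.add_zero]
      linear_combination hB + hI
  have hβ0 : ∀ p : ℕ, ∀ i ≤ p, β (p - i) i = 0 := by
    intro p
    apply IND p (fun i => β (p - i) i)
    intro r
    rw [Finset.sum_range_succ']
    have hC := EqC p r
    have hF := F p 0 (r+1)
    have hsum : ∑ i ∈ Finset.range p,
          β (p-(i+1)) (i+1) * (((r+1+(i+1)).factorial : ℂ))⁻¹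
        = ∑ i ∈ Finset.range p,
          β (p-1-i) (0+1+i) * (((r+1+1+i).factorial : ℂ))⁻¹ :=
      Finset.sum_congr rfl (fun i _ => by
        rw [show p-(i+1) = p-1-i from by omega,
          show r+1+(i+1) = r+1+1+i from by omega,
          show (i+1 : ℕ) = 0+1+i from by omega])
    rw [hsum, show p-0 = p from by omega]
    simp only [Nat.add_zero]
    linear_combination hC + hF
  have hβ : ∀ p q : ℕ, β p q = 0 := by
    intro p q
    have := hβ0 (p+q) q (by omega)
    rwa [Nat.add_sub_cancel] at this
  have hb0 : b = 0 := by
    apply MvPowerSeries.ext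
    intro d
    rw [map_zero]
    by_cases h2 : d 2 = 0
    · have hd : d = s (d 0) (d 1) 0 := by conv_lhs => rw [s_eq d, h2]
      rw [hd]
      exact hβ (d 0) (d 1)
    · by_contra hne
      exact h2 (hb d hne)
  have hc0 : c = 0 := by
    apply MvPowerSeries.ext
    intro d
    rw [map_zero, s_eq d]
    show γ (d 0) (d 1) (d 2) = 0
    rw [F]
    simp [hβ]
  have ha0 : a = 0 := by
    rw [hb0, hc0] at h
    simpa using h
  exact ⟨ha0, hb0, hc0⟩
end

section
/- The g_2 identity: in ℂ[[x,y,z]] one has x²·1 − (y − x/2)·G + (x·Σ_{m≥0} z^m/(m+1)!)·H = (1/2)·x²·Σ_{m≥2} ((m−1)/(m+1)!)·z^m. -/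
/-- x·Σ_{m≥0} z^m/(m+1)!  in ℂ[[x,y,z]]. -/
noncomputable def P : MvPowerSeries (Fin 3) ℂ :=
  fun d => if d 0 = 1 ∧ d 1 = 0 then ((Nat.factorial (d 2 + 1) : ℂ))⁻¹ else 0

/-- (1/2)·x²·Σ_{m≥2} ((m−1)/(m+1)!)·z^m  in ℂ[[x,y,z]]. -/
noncomputable def g2 : MvPowerSeries (Fin 3) ℂ :=
  fun d => if d 0 = 2 ∧ d 1 = 0 ∧ 2 ≤ d 2
    then (2 : ℂ)⁻¹ * (((d 2 - 1 : ℕ) : ℂ) / ((Nat.factorial (d 2 + 1) : ℂ))) else 0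

lemma coeff_X_mul'' (i : Fin 3) (F : MvPowerSeries (Fin 3) ℂ) (d : Fin 3 →₀ ℕ) :
    MvPowerSeries.coeff d (MvPowerSeries.X i * F) =
      if 1 ≤ d i then MvPowerSeries.coeff (d - Finsupp.single i 1) F else 0 := by
  rw [MvPowerSeries.X_def, MvPowerSeries.coeff_monomial_mul]
  simp [Finsupp.single_le_iff]

lemma fact_key (c : ℕ) (hc : 1 ≤ c) :
    (2:ℂ)⁻¹ * ((c.factorial : ℂ))⁻¹ - (((c+1).factorial : ℂ))⁻¹
      = 2⁻¹ * (((c - 1 : ℕ):ℂ) / ((c+1).factorial : ℂ)) := by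
  have h1 : ((c.factorial : ℂ)) ≠ 0 := Nat.cast_ne_zero.mpr c.factorial_ne_zero
  have h2 : (((c+1).factorial : ℂ)) ≠ 0 := Nat.cast_ne_zero.mpr (c+1).factorial_ne_zero
  have h3 : (((c+1).factorial : ℂ)) = ((c:ℂ)+1) * (c.factorial : ℂ) := by
    rw [Nat.factorial_succ]; push_cast; ring
  have h4 : ((c - 1 : ℕ) : ℂ) = (c : ℂ) - 1 := by
    rw [Nat.cast_sub hc, Nat.cast_one]
  have hc1 : ((c:ℂ) + 1) ≠ 0 := Nat.cast_add_one_ne_zero c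
  rw [h3, h4]
  field_simp
  ring

theorem g2_identity :
    MvPowerSeries.X 0 ^ 2 * 1
      - (MvPowerSeries.X 1 - (2 : ℂ)⁻¹ • MvPowerSeries.X 0) * G
      + P * H = g2 := by
  have hPH : P * H = MvPowerSeries.X 1 * (MvPowerSeries.X 2 * P) - MvPowerSeries.X 0 * P := by
    rw [H]; ring
  have hXG : (MvPowerSeries.X 1 - (2 : ℂ)⁻¹ • MvPowerSeries.X 0) * G
      = MvPowerSeries.X 1 * G - (2 : ℂ)⁻¹ • (MvPowerSeries.X 0 * G) := by
    rw [sub_mul, smul_mul_assoc]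
  ext d
  rw [mul_one, hPH, hXG, map_add, map_sub, map_sub, map_sub, map_smul,
    coeff_X_mul'', coeff_X_mul'', coeff_X_mul'', coeff_X_mul'', coeff_X_mul'',
    MvPowerSeries.X_pow_eq, MvPowerSeries.coeff_monomial]
  simp only [MvPowerSeries.coeff_apply, G, P, g2, Finsupp.tsub_apply, Finsupp.single_apply]
  norm_num [Fin.ext_iff]
  have hd : (d = Finsupp.single (0 : Fin 3) 2) ↔ (d 0 = 2 ∧ d 1 = 0 ∧ d 2 = 0) := by
    constructor
    · rintro rfl; simp
    · rintro ⟨h0, h1, h2⟩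
      ext j; fin_cases j <;> simp [Finsupp.single_apply, h0, h1, h2]
  simp only [hd]
  generalize d 0 = a
  generalize d 1 = b
  generalize d 2 = c
  rcases Nat.eq_zero_or_pos b with hb | hb
  · subst hb
    rcases eq_or_ne a 2 with ha | ha
    · subst ha
      rcases Nat.lt_or_ge c 2 with hc | hc
      · interval_cases c <;> norm_num [Nat.factorial]
      · have h := fact_key c (by omega)
        have h1c : 1 ≤ c := by omega
        have hcne : ¬(c = 0) := by omega
        have h4 : ((c - 1 : ℕ) : ℂ) = (c : ℂ) - 1 := by
          rw [Nat.cast_sub h1c, Nat.cast_one]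
        norm_num [h1c, hc, hcne]
        rw [h4] at h
        linear_combination h
    · simp [ha]
  · have hb' : b ≠ 0 := by omega
    simp only [hb, if_true, hb', and_false, false_and, if_false, sub_zero, and_true]
    rcases Nat.eq_zero_or_pos c with hc | hc
    · simp [hc]
    · have h1 : c - 1 + 1 = c := by omega
      simp only [show 1 ≤ b from hb, show 1 ≤ c from hc, if_true, h1, and_true]
      ring
end

section
/- The general g_k identity: for every k ≥ 1 there exists a unique c_k ∈ ℂ[[x,y,z]] such that a_k·1 + b_k·G + c_k·H = g_k, where g_k := x^k·Σ_{i≥k} q_{i,k}·z^i. -/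
/-- The rising factorial (1/2)^{\overline{k−1}} = (1/2)(1/2+1)⋯(1/2+k−2). -/
def rise (k : ℕ) : ℚ := ∏ j ∈ Finset.range (k - 1), ((1 : ℚ) / 2 + j)

/-- q_{i,k} = (i−1)! / (4^{k−1}·(i−k)!·(i+k−1)!·(1/2)^{\overline{k−1}}). -/
def q (i k : ℕ) : ℚ :=
  (Nat.factorial (i - 1) : ℚ) /
    (4 ^ (k - 1) * (Nat.factorial (i - k) : ℚ) * (Nat.factorial (i + k - 1) : ℚ) * rise k)

/-- The polynomials a_k : a₁ = 0, a₂ = x²,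
    a_k = −y·a_{k−1} + (4(2k−3)(2k−5))⁻¹·x²·a_{k−2} for k ≥ 3. -/
noncomputable def aP : ℕ → MvPowerSeries (Fin 3) ℂ
  | 0 => 0
  | 1 => 0
  | 2 => MvPowerSeries.X 0 ^ 2
  | (k + 3) => -(MvPowerSeries.X 1) * aP (k + 2)
      + (4 * (2 * (k : ℂ) + 3) * (2 * (k : ℂ) + 1))⁻¹ •
        (MvPowerSeries.X 0 ^ 2 * aP (k + 1))

/-- The polynomials b_k : b₁ = 1, b₂ = −y + x/2,
    b_k = −y·b_{k−1} + (4(2k−3)(2k−5))⁻¹·x²·b_{k−2} for k ≥ 3. -/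
noncomputable def bP : ℕ → MvPowerSeries (Fin 3) ℂ
  | 0 => 0
  | 1 => 1
  | 2 => -(MvPowerSeries.X 1) + (2 : ℂ)⁻¹ • MvPowerSeries.X 0
  | (k + 3) => -(MvPowerSeries.X 1) * bP (k + 2)
      + (4 * (2 * (k : ℂ) + 3) * (2 * (k : ℂ) + 1))⁻¹ •
        (MvPowerSeries.X 0 ^ 2 * bP (k + 1))

/-- g_k = x^k·Σ_{i≥k} q_{i,k}·z^i  in ℂ[[x,y,z]]. -/
noncomputable def gSeries (k : ℕ) : MvPowerSeries (Fin 3) ℂ :=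
  fun d => if d 0 = k ∧ d 1 = 0 ∧ k ≤ d 2 then ((q (d 2) k : ℚ) : ℂ) else 0

open MvPowerSeries Finsupp

/-! ### Auxiliary definitions and lemmas -/

/-- sh m = x^m·Σ_{i≥m−1} q_{i+1,m}·z^i, so that gSeries m = z · sh m. -/
noncomputable def sh (m : ℕ) : MvPowerSeries (Fin 3) ℂ :=
  fun d => if d 0 = m ∧ d 1 = 0 ∧ m - 1 ≤ d 2 then ((q (d 2 + 1) m : ℚ) : ℂ) else 0

lemma sub_single_apply (d : Fin 3 →₀ ℕ) (s t : Fin 3) (n : ℕ) :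
    (d - single s n) t = d t - if s = t then n else 0 := by
  rw [Finsupp.tsub_apply, Finsupp.single_apply]

lemma fin3_eq_iff (d e : Fin 3 →₀ ℕ) : d = e ↔ d 0 = e 0 ∧ d 1 = e 1 ∧ d 2 = e 2 := by
  constructor
  · rintro rfl; exact ⟨rfl, rfl, rfl⟩
  · rintro ⟨h0, h1, h2⟩
    ext i
    fin_cases i
    · exact h0
    · exact h1
    · exact h2

lemma L1 (m : ℕ) (hm : 1 ≤ m) : gSeries m = MvPowerSeries.X 2 * sh m := by
  ext d
  rw [coeff_apply, X_def, coeff_monomial_mul, gSeries]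
  by_cases hz : (single 2 1 : Fin 3 →₀ ℕ) ≤ d
  · rw [if_pos hz, one_mul, coeff_apply]
    simp only [sh]
    have hd2 : 1 ≤ d 2 := by simpa using (single_le_iff.mp hz)
    have e0 : ((d - single 2 1 : Fin 3 →₀ ℕ) 0) = d 0 := by
      rw [sub_single_apply, if_neg (by decide)]; omega
    have e1 : ((d - single 2 1 : Fin 3 →₀ ℕ) 1) = d 1 := by
      rw [sub_single_apply, if_neg (by decide)]; omega
    have e2 : ((d - single 2 1 : Fin 3 →₀ ℕ) 2) = d 2 - 1 := by
      rw [sub_single_apply, if_pos rfl]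
    rw [e0, e1, e2]
    split_ifs with h1 h2 h3 <;> try rfl
    · congr 2; omega
    · exfalso; omega
    · exfalso; omega
  · rw [if_neg hz]
    have hd2 : ¬ 1 ≤ d 2 := fun h => hz (single_le_iff.mpr h)
    rw [if_neg (by omega)]

lemma L2 (m : ℕ) (hm : 1 ≤ m) :
    MvPowerSeries.X 1 * gSeries m = sh m * H + MvPowerSeries.X 0 * sh m := by
  rw [L1 m hm, H]; ring

/-- Q n j = q (n+1+j) (n+1), a subtraction-free form. -/
def Q (n j : ℕ) : ℚ :=
  (Nat.factorial (n + j) : ℚ) /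
    (4 ^ n * (Nat.factorial j : ℚ) * (Nat.factorial (2 * n + j + 1) : ℚ) * rise (n + 1))

lemma q_eq (n j : ℕ) : q (n + 1 + j) (n + 1) = Q n j := by
  unfold q Q
  have h1 : n + 1 + j - 1 = n + j := by omega
  have h2 : n + 1 + j - (n + 1) = j := by omega
  have h3 : n + 1 + j + (n + 1) - 1 = 2 * n + j + 1 := by omega
  have h4 : n + 1 - 1 = n := by omega
  rw [h1, h2, h3, h4]

lemma rise_pos (k : ℕ) : 0 < rise k := by
  unfold rise
  exact Finset.prod_pos fun j _ => by positivity

lemma rise_succ (n : ℕ) : rise (n + 2) = rise (n + 1) * ((1 : ℚ)/2 + n) := by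
  unfold rise
  simp [Finset.prod_range_succ]

lemma QA (k : ℕ) : Q (k + 1) 0 = (4 * (2*(k:ℚ)+3) * (2*(k:ℚ)+1))⁻¹ * Q k 0 := by
  unfold Q
  rw [show k + 1 + 0 = (k + 0) + 1 by omega,
      show 2 * (k+1) + 0 + 1 = ((2*k+0+1)+1)+1 by omega,
      Nat.factorial_succ ((2*k+0+1)+1), Nat.factorial_succ (2*k+0+1),
      Nat.factorial_succ (k+0), rise_succ]
  have h1 : ((Nat.factorial (k+0) : ℚ)) ≠ 0 := Nat.cast_ne_zero.mpr (Nat.factorial_ne_zero _)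
  have h2 : ((Nat.factorial (2*k+0+1) : ℚ)) ≠ 0 := Nat.cast_ne_zero.mpr (Nat.factorial_ne_zero _)
  have h3 : rise (k+1) ≠ 0 := ne_of_gt (rise_pos _)
  have h4 : ((1:ℚ)/2 + k) ≠ 0 := by positivity
  have h5 : (2*(k:ℚ)+3) ≠ 0 := by positivity
  have h6 : (2*(k:ℚ)+1) ≠ 0 := by positivity
  field_simp
  push_cast
  ring

lemma QB (k : ℕ) : Q (k + 1) 1 = (4 * (2*(k:ℚ)+3) * (2*(k:ℚ)+1))⁻¹ * Q k 1 := by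
  unfold Q
  rw [show k + 1 + 1 = (k + 1) + 1 by omega,
      show 2 * (k+1) + 1 + 1 = ((2*k+1+1)+1)+1 by omega,
      Nat.factorial_succ ((2*k+1+1)+1), Nat.factorial_succ (2*k+1+1),
      Nat.factorial_succ (k+1), rise_succ]
  have h1 : ((Nat.factorial (k+1) : ℚ)) ≠ 0 := Nat.cast_ne_zero.mpr (Nat.factorial_ne_zero _)
  have h2 : ((Nat.factorial (2*k+1+1) : ℚ)) ≠ 0 := Nat.cast_ne_zero.mpr (Nat.factorial_ne_zero _)
  have h3 : rise (k+1) ≠ 0 := ne_of_gt (rise_pos _)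
  have h4 : ((1:ℚ)/2 + k) ≠ 0 := by positivity
  have h5 : (2*(k:ℚ)+3) ≠ 0 := by positivity
  have h6 : (2*(k:ℚ)+1) ≠ 0 := by positivity
  field_simp
  push_cast
  ring

lemma QC (k j : ℕ) : Q (k + 2) j
    = -Q (k + 1) (j + 2) + (4 * (2*(k:ℚ)+3) * (2*(k:ℚ)+1))⁻¹ * Q k (j + 2) := by
  unfold Q
  rw [show k + 1 + (j + 2) = (k + 2 + j) + 1 by omega, Nat.factorial_succ (k+2+j),
      show k + (j + 2) = k + 2 + j by omega,
      show 2 * (k+2) + j + 1 = ((2*k+j+3)+1)+1 by omega,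
      show 2 * (k+1) + (j+2) + 1 = ((2*k+j+3)+1)+1 by omega,
      show 2 * k + (j+2) + 1 = 2*k+j+3 by omega,
      Nat.factorial_succ ((2*k+j+3)+1), Nat.factorial_succ (2*k+j+3),
      show j + 2 = (j+1)+1 by omega, Nat.factorial_succ (j+1), Nat.factorial_succ j,
      show k + 3 = (k+1)+2 by omega, rise_succ (k+1), rise_succ k]
  have h1 : ((Nat.factorial (k+2+j) : ℚ)) ≠ 0 := Nat.cast_ne_zero.mpr (Nat.factorial_ne_zero _)
  have h2 : ((Nat.factorial (2*k+j+3) : ℚ)) ≠ 0 := Nat.cast_ne_zero.mpr (Nat.factorial_ne_zero _)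
  have h2' : ((Nat.factorial j : ℚ)) ≠ 0 := Nat.cast_ne_zero.mpr (Nat.factorial_ne_zero _)
  have h3 : rise (k+1) ≠ 0 := ne_of_gt (rise_pos _)
  have h4 : ((1:ℚ)/2 + k) ≠ 0 := by positivity
  have h4' : ((1:ℚ)/2 + (k+1:ℕ)) ≠ 0 := by positivity
  have h5 : (2*(k:ℚ)+3) ≠ 0 := by positivity
  have h6 : (2*(k:ℚ)+1) ≠ 0 := by positivity
  field_simp
  push_cast
  ring

lemma q_rec (k γ : ℕ) (h : k + 1 ≤ γ) :
    (if k + 3 ≤ γ then q γ (k + 3) else 0)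
      = -q (γ + 1) (k + 2) + (4 * (2*(k:ℚ)+3) * (2*(k:ℚ)+1))⁻¹ * q γ (k + 1) := by
  rcases Nat.lt_or_ge γ (k + 3) with hγ | hγ
  · rw [if_neg (by omega)]
    obtain rfl | rfl : γ = k + 1 ∨ γ = k + 2 := by omega
    · -- γ = k+1
      rw [show k + 1 + 1 = (k+1) + 1 + 0 by omega, q_eq]
      rw [show k + 1 = k + 1 + 0 by omega, q_eq, QA]
      ring
    · -- γ = k+2
      rw [show k + 2 + 1 = (k+1) + 1 + 1 by omega, q_eq]
      rw [show k + 2 = k + 1 + 1 by omega, q_eq, QB]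
      ring
  · obtain ⟨j, rfl⟩ : ∃ j, γ = k + 3 + j := ⟨γ - (k+3), by omega⟩
    rw [if_pos (by omega)]
    rw [show k + 3 + j = (k+2) + 1 + j by omega, q_eq]
    rw [show k + 2 + 1 + j + 1 = (k+1) + 1 + (j+2) by omega, q_eq]
    rw [show k + 2 + 1 + j = k + 1 + (j + 2) by omega, q_eq, QC]

lemma q_one (i : ℕ) : q i 1 = ((Nat.factorial i : ℚ))⁻¹ := by
  unfold q rise
  rw [show i + 1 - 1 = i by omega, show (1:ℕ) - 1 = 0 by omega]
  have h1 : ((Nat.factorial (i-1) : ℚ)) ≠ 0 := Nat.cast_ne_zero.mpr (Nat.factorial_ne_zero _)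
  have h2 : ((Nat.factorial i : ℚ)) ≠ 0 := Nat.cast_ne_zero.mpr (Nat.factorial_ne_zero _)
  simp only [Finset.range_zero, Finset.prod_empty, pow_zero]
  field_simp

lemma base1 : G = gSeries 1 := by
  ext d
  rw [coeff_apply, coeff_apply]
  unfold G gSeries
  split_ifs with h1
  · rw [q_one]; push_cast; ring
  · rfl

lemma q_two (j : ℕ) : q (j+2) 2
    = -((Nat.factorial (j+3):ℚ))⁻¹ + (2:ℚ)⁻¹ * ((Nat.factorial (j+2):ℚ))⁻¹ := by
  unfold q rise
  rw [show j + 2 - 1 = j + 1 by omega, show j + 2 - 2 = j by omega,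
      show j + 2 + 2 - 1 = ((j+1)+1)+1 by omega, show (2:ℕ) - 1 = 1 by omega,
      Nat.factorial_succ ((j+1)+1), Nat.factorial_succ (j+1), Nat.factorial_succ j,
      show j + 3 = ((j+1)+1)+1 by omega]
  have h1 : ((Nat.factorial j : ℚ)) ≠ 0 := Nat.cast_ne_zero.mpr (Nat.factorial_ne_zero _)
  simp only [Finset.prod_range_one, Nat.cast_zero, pow_one]
  field_simp
  push_cast
  ring

lemma L4 : gSeries 2 = MvPowerSeries.X 0^2 - MvPowerSeries.X 0 * sh 1
    + (2:ℂ)⁻¹ • (MvPowerSeries.X 0 * G) := by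
  ext d
  rw [coeff_apply, map_add, map_sub, X_pow_eq, coeff_monomial, coeff_smul]
  simp only [X_def, coeff_monomial_mul, one_mul]
  simp only [coeff_apply]
  simp only [gSeries, sh, G, Finsupp.single_le_iff, sub_single_apply]
  simp only [fin3_eq_iff, Finsupp.single_apply]
  norm_num [show ¬ ((0:Fin 3) = 2) from by decide]
  by_cases hm : d 0 = 2 ∧ d 1 = 0
  · obtain ⟨h0, h1⟩ := hm
    rcases Nat.lt_or_ge (d 2) 2 with h | h
    · have h2 : d 2 = 0 ∨ d 2 = 1 := by omega
      rcases h2 with h2 | h2 <;> rw [h2] <;> split_ifs <;>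
        first | (exfalso; (first | omega | tauto)) | norm_num [q_one, Nat.factorial]
    · obtain ⟨j, hj⟩ : ∃ j, d 2 = j + 2 := ⟨d 2 - 2, by omega⟩
      rw [hj]
      split_ifs <;> try (exfalso; (first | omega | tauto))
      rw [show j + 2 + 1 = j + 3 from rfl, q_one, q_two]
      push_cast
      ring
  · split_ifs <;> first | (exfalso; omega) | norm_num

lemma L5 : aP 2 * 1 + bP 2 * G + sh 1 * H = gSeries 2 := by
  have h2 := L2 1 le_rfl
  rw [← base1] at h2
  have ha : aP 2 = MvPowerSeries.X 0 ^ 2 := rfl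
  have hb : bP 2 = -(MvPowerSeries.X 1) + (2:ℂ)⁻¹ • MvPowerSeries.X 0 := rfl
  rw [ha, hb, L4]
  simp only [MvPowerSeries.smul_eq_C_mul] at *
  linear_combination -h2

lemma q_recC (k γ : ℕ) (h : k + 1 ≤ γ) :
    (if k + 3 ≤ γ then ((q γ (k+3) : ℚ) : ℂ) else 0)
      = -((q (γ+1) (k+2) : ℚ) : ℂ)
        + (4 * (2*(k:ℂ)+3) * (2*(k:ℂ)+1))⁻¹ * ((q γ (k+1) : ℚ) : ℂ) := by
  have h2 := congrArg (fun r : ℚ => (r : ℂ)) (q_rec k γ h)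
  simp only [apply_ite (fun r : ℚ => (r : ℂ))] at h2
  push_cast at h2
  convert h2 using 2

lemma L7 (k : ℕ) : gSeries (k+3) = -(MvPowerSeries.X 0) * sh (k+2)
    + ((4 * (2*(k:ℂ)+3) * (2*(k:ℂ)+1))⁻¹) • (MvPowerSeries.X 0^2 * gSeries (k+1)) := by
  ext d
  rw [coeff_apply, neg_mul, map_add, map_neg, coeff_smul, X_pow_eq]
  simp only [X_def, coeff_monomial_mul, one_mul]
  simp only [coeff_apply]
  simp only [gSeries, sh, Finsupp.single_le_iff, sub_single_apply]
  norm_num [show ¬ ((0:Fin 3) = 1) from by decide, show ¬ ((0:Fin 3) = 2) from by decide]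
  by_cases hm : d 0 = k + 3 ∧ d 1 = 0 ∧ k + 1 ≤ d 2
  · obtain ⟨h0, h1, h2⟩ := hm
    have hq := q_recC k (d 2) h2
    simp only [mul_inv] at hq
    rcases Nat.lt_or_ge (d 2) (k+3) with hlt | hge
    · rw [if_neg (by omega)] at hq
      rw [if_neg (by omega), if_pos (by omega), if_pos (by omega), if_pos (by omega),
        if_pos (by omega)]
      linear_combination hq
    · rw [if_pos (by omega)] at hq
      rw [if_pos (by omega), if_pos (by omega), if_pos (by omega), if_pos (by omega),
        if_pos (by omega)]
      linear_combination hq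
  · split_ifs <;> first | (exfalso; omega) | norm_num

lemma L8 (k : ℕ) : gSeries (k+3) = -(MvPowerSeries.X 1) * gSeries (k+2)
    + ((4 * (2*(k:ℂ)+3) * (2*(k:ℂ)+1))⁻¹) • (MvPowerSeries.X 0^2 * gSeries (k+1))
    + sh (k+2) * H := by
  have h2 := L2 (k+2) (by omega)
  rw [L7 k]
  simp only [MvPowerSeries.smul_eq_C_mul] at *
  linear_combination h2

lemma exist_pair : ∀ n : ℕ,
    (∃ c, aP (n+1) * 1 + bP (n+1) * G + c * H = gSeries (n+1)) ∧
    (∃ c, aP (n+2) * 1 + bP (n+2) * G + c * H = gSeries (n+2))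
  | 0 => ⟨⟨0, by
      rw [show aP 1 = 0 from rfl, show bP 1 = 1 from rfl, base1]; ring⟩,
    ⟨sh 1, L5⟩⟩
  | (n+1) => by
    obtain ⟨⟨c1, hc1⟩, ⟨c2, hc2⟩⟩ := exist_pair n
    refine ⟨⟨c2, hc2⟩,
      ⟨-(MvPowerSeries.X 1) * c2
        + ((4 * (2*(n:ℂ)+3) * (2*(n:ℂ)+1))⁻¹) • (MvPowerSeries.X 0^2 * c1) + sh (n+2), ?_⟩⟩
    have ha : aP (n+3) = -(MvPowerSeries.X 1) * aP (n + 2)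
      + (4 * (2 * (n : ℂ) + 3) * (2 * (n : ℂ) + 1))⁻¹ •
        (MvPowerSeries.X 0 ^ 2 * aP (n + 1)) := rfl
    have hb : bP (n+3) = -(MvPowerSeries.X 1) * bP (n + 2)
      + (4 * (2 * (n : ℂ) + 3) * (2 * (n : ℂ) + 1))⁻¹ •
        (MvPowerSeries.X 0 ^ 2 * bP (n + 1)) := rfl
    rw [ha, hb, L8 n]
    simp only [MvPowerSeries.smul_eq_C_mul] at *
    linear_combination (-(MvPowerSeries.X 1 : MvPowerSeries (Fin 3) ℂ)) * hc2
      + (MvPowerSeries.C ((4 * (2*(n:ℂ)+3) * (2*(n:ℂ)+1))⁻¹)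
          * (MvPowerSeries.X 0 ^ 2 : MvPowerSeries (Fin 3) ℂ)) * hc1

lemma H_ne_zero : H ≠ 0 := by
  intro h
  have h2 := congrArg (MvPowerSeries.coeff (single 0 1)) h
  rw [H, map_sub] at h2
  rw [MvPowerSeries.coeff_X, if_pos rfl] at h2
  rw [X_def, coeff_monomial_mul, if_neg] at h2
  · simp at h2
  · rw [single_le_iff]
    simp [Finsupp.single_apply]

theorem gk_identity (k : ℕ) (hk : 1 ≤ k) :
    ∃! c : MvPowerSeries (Fin 3) ℂ,
      aP k * 1 + bP k * G + c * H = gSeries k := by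
  obtain ⟨n, rfl⟩ : ∃ n, k = n + 1 := ⟨k - 1, by omega⟩
  obtain ⟨c, hc⟩ := (exist_pair n).1
  refine ⟨c, hc, fun c' hc' => ?_⟩
  have hcc : c' * H = c * H := by linear_combination hc' - hc
  exact mul_right_cancel₀ H_ne_zero hcc
end

section
/- Unit coefficient in c_k: for every k ≥ 2, the unique series c_k ∈ ℂ[[x,y,z]] satisfying a_k·1 + b_k·G + c_k·H = x^k·Σ_{i≥k} q_{i,k}·z^i has coefficient of absolute value 1 at the monomial x·y^{k−2} (z-exponent 0). -/
open MvPowerSeries Finsupp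

lemma aP_low : ∀ m : ℕ, ∀ d : Fin 3 →₀ ℕ, d 0 ≤ 1 → MvPowerSeries.coeff d (aP m) = 0
  | 0, d, hd => by simp [aP]
  | 1, d, hd => by simp [aP]
  | 2, d, hd => by
      rw [aP, X_pow_eq, coeff_monomial, if_neg]
      intro h
      rw [h] at hd
      simp at hd
  | (k+3), d, hd => by
      rw [aP, map_add, map_smul, neg_mul, map_neg]
      have h1 : MvPowerSeries.coeff d (MvPowerSeries.X 1 * aP (k+2)) = 0 := by
        rw [show (MvPowerSeries.X 1 : MvPowerSeries (Fin 3) ℂ) = monomial (single 1 1) 1 from rfl,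
          coeff_monomial_mul]
        split_ifs with h
        · rw [one_mul, aP_low (k+2)]
          simpa using hd
        · rfl
      have h2 : MvPowerSeries.coeff d (MvPowerSeries.X 0 ^ 2 * aP (k+1)) = 0 := by
        rw [X_pow_eq, coeff_monomial_mul, if_neg]
        intro h
        have := h 0
        simp at this
        omega
      rw [h1, h2]
      simp

lemma aP_main : ∀ n : ℕ, MvPowerSeries.coeff (single 0 2 + single 1 n) (aP (n+2)) = (-1)^n
  | 0 => by
      rw [aP, X_pow_eq, coeff_monomial, if_pos (by simp)]
      simp
  | (n+1) => by
      rw [aP, map_add, map_smul, neg_mul, map_neg]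
      have h2 : MvPowerSeries.coeff (single 0 2 + single 1 (n+1))
          (MvPowerSeries.X 0 ^ 2 * aP (n+1)) = 0 := by
        rw [X_pow_eq, coeff_monomial_mul, if_pos]
        · rw [one_mul, show (single 0 2 + single 1 (n+1) - single 0 2 : Fin 3 →₀ ℕ)
            = single 1 (n+1) by ext i; fin_cases i <;> simp [Finsupp.single_apply]]
          exact aP_low (n+1) _ (by simp)
        · intro i
          fin_cases i <;> simp [Finsupp.single_apply]
      have h1 : MvPowerSeries.coeff (single 0 2 + single 1 (n+1))
          (MvPowerSeries.X 1 * aP (n+2)) = (-1)^n := by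
        rw [show (MvPowerSeries.X 1 : MvPowerSeries (Fin 3) ℂ) = monomial (single 1 1) 1 from rfl,
          coeff_monomial_mul, if_pos]
        · rw [one_mul, show (single 0 2 + single 1 (n+1) - single 1 1 : Fin 3 →₀ ℕ)
            = single 0 2 + single 1 n by ext i; fin_cases i <;> simp [Finsupp.single_apply]]
          exact aP_main n
        · intro i
          fin_cases i <;> simp [Finsupp.single_apply]
      rw [h1, h2]
      rw [smul_zero]
      ring

theorem ck_unit_coefficient (k : ℕ) (hk : 2 ≤ k)
    (c : MvPowerSeries (Fin 3) ℂ)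
    (hc : aP k * 1 + bP k * G + c * H = gSeries k) :
    ‖MvPowerSeries.coeff
      (Finsupp.single 0 1 + Finsupp.single 1 (k - 2)) c‖ = 1 := by
  classical
  set d : Fin 3 →₀ ℕ := Finsupp.single 0 2 + Finsupp.single 1 (k - 2) with hd
  have hd2 : d 2 = 0 := by simp [hd, Finsupp.single_apply]
  have hcoeff := congrArg (MvPowerSeries.coeff d) hc
  rw [map_add, map_add, mul_one] at hcoeff
  -- a-part
  have ha : MvPowerSeries.coeff d (aP k) = (-1 : ℂ) ^ (k - 2) := by
    have := aP_main (k - 2)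
    rwa [show k - 2 + 2 = k by omega] at this
  -- b·G part vanishes
  have hbG : MvPowerSeries.coeff d (bP k * G) = 0 := by
    rw [MvPowerSeries.coeff_mul]
    refine Finset.sum_eq_zero fun p hp => ?_
    rw [Finset.HasAntidiagonal.mem_antidiagonal] at hp
    have hp2 : p.2 2 = 0 := by
      have : p.1 2 + p.2 2 = d 2 := by rw [← hp]; rfl
      omega
    have : MvPowerSeries.coeff p.2 G = 0 := by
      rw [MvPowerSeries.coeff_apply, G, if_neg]
      intro h
      omega
    rw [this, mul_zero]
  -- g part vanishes
  have hg : MvPowerSeries.coeff d (gSeries k) = 0 := by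
    rw [MvPowerSeries.coeff_apply, gSeries, if_neg]
    intro h
    omega
  -- c·H part
  have hcH : MvPowerSeries.coeff d (c * H) =
      -(MvPowerSeries.coeff (Finsupp.single 0 1 + Finsupp.single 1 (k - 2)) c) := by
    rw [H, mul_sub, map_sub]
    have h1 : MvPowerSeries.coeff d (c * (MvPowerSeries.X 1 * MvPowerSeries.X 2)) = 0 := by
      rw [show (MvPowerSeries.X 1 * MvPowerSeries.X 2 : MvPowerSeries (Fin 3) ℂ)
          = MvPowerSeries.monomial (Finsupp.single 1 1 + Finsupp.single 2 1) 1 by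
        rw [show (MvPowerSeries.X 1 : MvPowerSeries (Fin 3) ℂ)
            = MvPowerSeries.monomial (Finsupp.single 1 1) 1 from rfl,
          show (MvPowerSeries.X 2 : MvPowerSeries (Fin 3) ℂ)
            = MvPowerSeries.monomial (Finsupp.single 2 1) 1 from rfl,
          MvPowerSeries.monomial_mul_monomial, one_mul]]
      rw [MvPowerSeries.coeff_mul_monomial, if_neg]
      intro h
      have := h 2
      simp [hd, Finsupp.single_apply] at this
    have h2 : MvPowerSeries.coeff d (c * MvPowerSeries.X 0) =
        MvPowerSeries.coeff (Finsupp.single 0 1 + Finsupp.single 1 (k - 2)) c := by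
      rw [show (MvPowerSeries.X 0 : MvPowerSeries (Fin 3) ℂ)
          = MvPowerSeries.monomial (Finsupp.single 0 1) 1 from rfl,
        MvPowerSeries.coeff_mul_monomial, if_pos, mul_one]
      · have he : d - Finsupp.single 0 1
            = Finsupp.single 0 1 + Finsupp.single 1 (k - 2) := by
          ext i
          fin_cases i <;> simp [hd, Finsupp.single_apply]
        rw [he]
      · intro i
        fin_cases i <;> simp [hd, Finsupp.single_apply]
    rw [h1, h2, zero_sub]
  rw [ha, hbG, hcH, hg, add_zero] at hcoeff
  have : MvPowerSeries.coeff (Finsupp.single 0 1 + Finsupp.single 1 (k - 2)) c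
      = (-1 : ℂ) ^ (k - 2) := by linear_combination -hcoeff
  rw [this]
  simp
end

section
/- Formal presentation of the series e: the families (q_{k,k}^{−1}·a_k)_{k≥2}, (q_{k,k}^{−1}·b_k)_{k≥2} and (q_{k,k}^{−1}·c_k)_{k≥2} are summable coefficientwise in ℂ[[x,y,z]] (for each fixed exponent only finitely many summands have a nonzero coefficient there), and their sums a = Σ_{k≥2} q_{k,k}^{−1}·a_k, b = Σ_{k≥2} q_{k,k}^{−1}·b_k, c = Σ_{k≥2} q_{k,k}^{−1}·c_k satisfy: a and b depend only on x,y and e = a·1 + b·G + c·H, where e is the formal power series whose coefficient at x^k z^i equals q_{i,k}/q_{k,k} for i ≥ k ≥ 2 and which has zero coefficient at every other monomial. -/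
/-- The series e, with coefficient q_{i,k}/q_{k,k} at x^k z^i for i ≥ k ≥ 2
and zero coefficient at every other monomial. -/
noncomputable def eS : MvPowerSeries (Fin 3) ℂ :=
  fun d => if 2 ≤ d 0 ∧ d 1 = 0 ∧ d 0 ≤ d 2
    then ((q (d 2) (d 0) / q (d 0) (d 0) : ℚ) : ℂ) else 0


namespace EPres

open MvPowerSeries Finsupp Finset

/-- total degree of an exponent -/
def deg (d : Fin 3 →₀ ℕ) : ℕ := d 0 + d 1 + d 2

lemma deg_add (p r : Fin 3 →₀ ℕ) : deg (p + r) = deg p + deg r := by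
  simp only [deg, Finsupp.add_apply]; ring

lemma coeff_Xmul (i : Fin 3) (F : MvPowerSeries (Fin 3) ℂ) (d : Fin 3 →₀ ℕ) :
    MvPowerSeries.coeff d (MvPowerSeries.X i * F) =
      if Finsupp.single i 1 ≤ d then
        MvPowerSeries.coeff (d - Finsupp.single i 1) F else 0 := by
  rw [MvPowerSeries.X_def, MvPowerSeries.coeff_monomial_mul]
  split <;> simp

lemma coeff_X0sq_mul (F : MvPowerSeries (Fin 3) ℂ) (d : Fin 3 →₀ ℕ) :
    MvPowerSeries.coeff d (MvPowerSeries.X 0 ^ 2 * F) =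
      if Finsupp.single (0 : Fin 3) 2 ≤ d then
        MvPowerSeries.coeff (d - Finsupp.single (0 : Fin 3) 2) F else 0 := by
  rw [MvPowerSeries.X_pow_eq, MvPowerSeries.coeff_monomial_mul]
  split <;> simp

lemma aP_supp : ∀ k (d : Fin 3 →₀ ℕ),
    MvPowerSeries.coeff d (aP k) ≠ 0 → d 2 = 0 ∧ d 0 + d 1 = k := by
  intro k
  induction k using Nat.strong_induction_on with
  | _ k ih =>
    match k with
    | 0 => intro d h; simp [aP] at h
    | 1 => intro d h; simp [aP] at h
    | 2 =>
      intro d h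
      rw [show aP 2 = MvPowerSeries.X 0 ^ 2 from rfl, MvPowerSeries.X_pow_eq,
        MvPowerSeries.coeff_monomial] at h
      split at h
      · subst ‹d = _›; simp [Finsupp.single_apply]
      · simp at h
    | (k + 3) =>
      intro d h
      rw [show aP (k + 3) = -(MvPowerSeries.X 1) * aP (k + 2)
          + (4 * (2 * (k : ℂ) + 3) * (2 * (k : ℂ) + 1))⁻¹ •
            (MvPowerSeries.X 0 ^ 2 * aP (k + 1)) from rfl,
        map_add, MvPowerSeries.coeff_smul, neg_mul, map_neg] at h
      have hor : MvPowerSeries.coeff d (MvPowerSeries.X 1 * aP (k + 2)) ≠ 0 ∨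
          MvPowerSeries.coeff d (MvPowerSeries.X 0 ^ 2 * aP (k + 1)) ≠ 0 := by
        by_contra hcon
        push_neg at hcon
        rw [hcon.1, hcon.2] at h
        simp at h
      rcases hor with h1 | h1
      · rw [coeff_Xmul] at h1
        split at h1
        · rename_i hle
          obtain ⟨hz, hs⟩ := ih (k + 2) (by omega) _ h1
          have hle1 := hle 1
          simp only [Finsupp.tsub_apply, Finsupp.single_apply] at hz hs hle1
          simp at hle1 hz hs
          omega
        · exact absurd rfl h1
      · rw [coeff_X0sq_mul] at h1
        split at h1
        · rename_i hle
          obtain ⟨hz, hs⟩ := ih (k + 1) (by omega) _ h1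
          have hle0 := hle 0
          simp only [Finsupp.tsub_apply, Finsupp.single_apply] at hz hs hle0
          simp at hle0 hz hs
          omega
        · exact absurd rfl h1

end EPres

namespace EPres

lemma bP_supp : ∀ k (d : Fin 3 →₀ ℕ),
    MvPowerSeries.coeff d (bP k) ≠ 0 → d 2 = 0 ∧ d 0 + d 1 + 1 = k := by
  intro k
  induction k using Nat.strong_induction_on with
  | _ k ih =>
    match k with
    | 0 => intro d h; simp [bP] at h
    | 1 =>
      intro d h
      rw [show bP 1 = 1 from rfl, MvPowerSeries.coeff_one] at h
      split at h
      · subst ‹d = 0›; simp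
      · exact absurd rfl h
    | 2 =>
      intro d h
      rw [show bP 2 = -(MvPowerSeries.X 1) + (2 : ℂ)⁻¹ • MvPowerSeries.X 0 from rfl,
        map_add, map_neg, MvPowerSeries.coeff_smul] at h
      have hor : MvPowerSeries.coeff d (MvPowerSeries.X 1 : MvPowerSeries (Fin 3) ℂ) ≠ 0 ∨
          MvPowerSeries.coeff d (MvPowerSeries.X 0 : MvPowerSeries (Fin 3) ℂ) ≠ 0 := by
        by_contra hcon
        push_neg at hcon
        rw [hcon.1, hcon.2] at h
        simp at h
      rcases hor with h1 | h1 <;> rw [MvPowerSeries.coeff_X] at h1 <;> split at h1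
      · subst ‹d = _›; simp [Finsupp.single_apply]
      · exact absurd rfl h1
      · subst ‹d = _›; simp [Finsupp.single_apply]
      · exact absurd rfl h1
    | (k + 3) =>
      intro d h
      rw [show bP (k + 3) = -(MvPowerSeries.X 1) * bP (k + 2)
          + (4 * (2 * (k : ℂ) + 3) * (2 * (k : ℂ) + 1))⁻¹ •
            (MvPowerSeries.X 0 ^ 2 * bP (k + 1)) from rfl,
        map_add, MvPowerSeries.coeff_smul, neg_mul, map_neg] at h
      have hor : MvPowerSeries.coeff d (MvPowerSeries.X 1 * bP (k + 2)) ≠ 0 ∨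
          MvPowerSeries.coeff d (MvPowerSeries.X 0 ^ 2 * bP (k + 1)) ≠ 0 := by
        by_contra hcon
        push_neg at hcon
        rw [hcon.1, hcon.2] at h
        simp at h
      rcases hor with h1 | h1
      · rw [coeff_Xmul] at h1
        split at h1
        · rename_i hle
          obtain ⟨hz, hs⟩ := ih (k + 2) (by omega) _ h1
          have hle1 := hle 1
          simp only [Finsupp.tsub_apply, Finsupp.single_apply] at hz hs hle1
          simp at hle1 hz hs
          omega
        · exact absurd rfl h1
      · rw [coeff_X0sq_mul] at h1
        split at h1
        · rename_i hle
          obtain ⟨hz, hs⟩ := ih (k + 1) (by omega) _ h1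
          have hle0 := hle 0
          simp only [Finsupp.tsub_apply, Finsupp.single_apply] at hz hs hle0
          simp at hle0 hz hs
          omega
        · exact absurd rfl h1

lemma G_supp (d : Fin 3 →₀ ℕ) (h : MvPowerSeries.coeff d G ≠ 0) :
    d 0 = 1 ∧ d 1 = 0 ∧ 1 ≤ d 2 := by
  rw [MvPowerSeries.coeff_apply] at h
  by_contra hcon
  exact h (if_neg hcon)

lemma gSeries_supp (k : ℕ) (d : Fin 3 →₀ ℕ) (h : MvPowerSeries.coeff d (gSeries k) ≠ 0) :
    d 0 = k ∧ d 1 = 0 ∧ k ≤ d 2 := by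
  rw [MvPowerSeries.coeff_apply] at h
  by_contra hcon
  exact h (if_neg hcon)

lemma bPG_supp (k : ℕ) (d : Fin 3 →₀ ℕ)
    (h : MvPowerSeries.coeff d (bP k * G) ≠ 0) : k + 1 ≤ deg d := by
  rw [MvPowerSeries.coeff_mul] at h
  obtain ⟨p, hp, hne⟩ := Finset.exists_ne_zero_of_sum_ne_zero h
  have h1 := bP_supp k p.1 (left_ne_zero_of_mul hne)
  have h2 := G_supp p.2 (right_ne_zero_of_mul hne)
  have hd : p.1 + p.2 = d := Finset.HasAntidiagonal.mem_antidiagonal.mp hp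
  have : deg p.1 + deg p.2 = deg d := by rw [← deg_add, hd]
  simp only [deg] at this ⊢
  omega

lemma rhs_supp (k : ℕ) (d : Fin 3 →₀ ℕ)
    (h : MvPowerSeries.coeff d (gSeries k - aP k - bP k * G) ≠ 0) : k ≤ deg d := by
  rw [map_sub, map_sub] at h
  have hor : MvPowerSeries.coeff d (gSeries k) ≠ 0 ∨
      MvPowerSeries.coeff d (aP k) ≠ 0 ∨ MvPowerSeries.coeff d (bP k * G) ≠ 0 := by
    by_contra hcon
    push_neg at hcon
    rw [hcon.1, hcon.2.1, hcon.2.2] at h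
    simp at h
  rcases hor with h1 | h1 | h1
  · obtain ⟨h0, _, h2⟩ := gSeries_supp k d h1
    simp only [deg]; omega
  · obtain ⟨hz, hs⟩ := aP_supp k d h1
    simp only [deg]; omega
  · have := bPG_supp k d h1
    omega

end EPres

namespace EPres

lemma deg_single01 : deg (Finsupp.single (0 : Fin 3) 1) = 1 := by
  simp [deg, Finsupp.single_apply]

lemma mulH_supp (F R : MvPowerSeries (Fin 3) ℂ) (hFH : F * H = R) (N : ℕ)
    (hR : ∀ d, MvPowerSeries.coeff d R ≠ 0 → N ≤ deg d) :
    ∀ e, deg e + 1 < N → MvPowerSeries.coeff e F = 0 := by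
  suffices hsuf : ∀ n, ∀ e, deg e ≤ n → deg e + 1 < N → MvPowerSeries.coeff e F = 0 from
    fun e he => hsuf (deg e) e le_rfl he
  intro n
  induction n using Nat.strong_induction_on with
  | _ n ih =>
    intro e hen heN
    set s0 : Fin 3 →₀ ℕ := Finsupp.single (0 : Fin 3) 1 with hs0
    -- coeff (e + s0) R = coeff (e+s0) (F * (X1 * X2)) - coeff e F
    have hXX : (MvPowerSeries.X 1 * MvPowerSeries.X 2 : MvPowerSeries (Fin 3) ℂ)
        = MvPowerSeries.monomial (Finsupp.single (1 : Fin 3) 1 + Finsupp.single (2 : Fin 3) 1) 1 := by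
      rw [MvPowerSeries.X_def, MvPowerSeries.X_def, MvPowerSeries.monomial_mul_monomial, one_mul]
    have key : MvPowerSeries.coeff (e + s0) R
        = MvPowerSeries.coeff (e + s0) (F * (MvPowerSeries.X 1 * MvPowerSeries.X 2))
          - MvPowerSeries.coeff e F := by
      rw [← hFH, show F * H = F * (MvPowerSeries.X 1 * MvPowerSeries.X 2)
        - F * MvPowerSeries.X 0 by rw [H]; ring, map_sub]
      congr 1
      rw [MvPowerSeries.X_def, MvPowerSeries.coeff_add_mul_monomial, mul_one]
    have hR0 : MvPowerSeries.coeff (e + s0) R = 0 := by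
      by_contra hne
      have := hR _ hne
      rw [deg_add, deg_single01] at this
      omega
    have hXX0 : MvPowerSeries.coeff (e + s0)
        (F * (MvPowerSeries.X 1 * MvPowerSeries.X 2)) = 0 := by
      rw [hXX, MvPowerSeries.coeff_mul_monomial]
      split
      · rename_i hle
        rw [mul_one]
        set s12 := Finsupp.single (1 : Fin 3) 1 + Finsupp.single (2 : Fin 3) 1 with hs12
        have heq : (e + s0 - s12) + s12 = e + s0 := tsub_add_cancel_of_le hle
        have hdeg : deg (e + s0 - s12) + deg s12 = deg e + 1 := by
          rw [← deg_add, heq, deg_add, deg_single01]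
        have hds12 : deg s12 = 2 := by
          simp [hs12, deg, Finsupp.add_apply, Finsupp.single_apply]
        refine ih (deg (e + s0 - s12)) (by omega) _ le_rfl (by omega)
      · rfl
    rw [hXX0, hR0] at key
    simpa using key.symm

lemma c_supp (c : ℕ → MvPowerSeries (Fin 3) ℂ)
    (hc : ∀ k : ℕ, 2 ≤ k → aP k * 1 + bP k * G + c k * H = gSeries k)
    (k : ℕ) (hk : 2 ≤ k) (d : Fin 3 →₀ ℕ) (hd : deg d + 1 < k) :
    MvPowerSeries.coeff d (c k) = 0 := by
  have hmul : c k * H = gSeries k - aP k - bP k * G := by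
    have := hc k hk
    rw [mul_one] at this
    linear_combination this
  exact mulH_supp (c k) _ hmul k (rhs_supp k) d hd

end EPres

namespace EPres

/-- coefficientwise sum of the family (q_{k,k}⁻¹ F_k)_{k≥2} -/
noncomputable def sumS (F : ℕ → MvPowerSeries (Fin 3) ℂ) : MvPowerSeries (Fin 3) ℂ :=
  fun e => ∑' k : ℕ, if 2 ≤ k then ((q k k : ℂ))⁻¹ * MvPowerSeries.coeff e (F k) else 0

lemma coeff_sumS (F : ℕ → MvPowerSeries (Fin 3) ℂ) (d : Fin 3 →₀ ℕ) :
    MvPowerSeries.coeff d (sumS F) =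
      ∑' k : ℕ, if 2 ≤ k then ((q k k : ℂ))⁻¹ * MvPowerSeries.coeff d (F k) else 0 := rfl

lemma summable_if (F : ℕ → MvPowerSeries (Fin 3) ℂ)
    (hF : ∀ (p : Fin 3 →₀ ℕ) k, deg p + 2 ≤ k → MvPowerSeries.coeff p (F k) = 0)
    (d : Fin 3 →₀ ℕ) :
    Summable (fun k => if 2 ≤ k then ((q k k : ℂ))⁻¹ * MvPowerSeries.coeff d (F k) else 0) := by
  refine summable_of_ne_finset_zero (s := Finset.range (deg d + 2)) fun k hk => ?_
  have hk' : deg d + 2 ≤ k := by simpa using hk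
  rw [if_pos (by omega), hF d k hk', mul_zero]

set_option maxHeartbeats 1000000 in
lemma coeff_sumS_mul (F : ℕ → MvPowerSeries (Fin 3) ℂ)
    (hF : ∀ (p : Fin 3 →₀ ℕ) k, deg p + 2 ≤ k → MvPowerSeries.coeff p (F k) = 0)
    (Gg : MvPowerSeries (Fin 3) ℂ) (d : Fin 3 →₀ ℕ) :
    MvPowerSeries.coeff d (sumS F * Gg) =
      ∑' k : ℕ, if 2 ≤ k then ((q k k : ℂ))⁻¹ * MvPowerSeries.coeff d (F k * Gg) else 0 := by
  classical
  rw [MvPowerSeries.coeff_mul]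
  have step1 : ∀ p ∈ Finset.HasAntidiagonal.antidiagonal d,
      MvPowerSeries.coeff p.1 (sumS F) * MvPowerSeries.coeff p.2 Gg
      = ∑' k : ℕ, (if 2 ≤ k then ((q k k : ℂ))⁻¹ * MvPowerSeries.coeff p.1 (F k) else 0) *
          MvPowerSeries.coeff p.2 Gg := by
    intro p _
    rw [coeff_sumS]
    exact (Summable.tsum_mul_right _ (summable_if F hF p.1)).symm
  rw [Finset.sum_congr rfl step1]
  rw [← Summable.tsum_finsetSum (fun p _ => (summable_if F hF p.1).mul_right _)]
  refine tsum_congr fun k => ?_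
  split
  · rw [MvPowerSeries.coeff_mul, Finset.mul_sum]
    exact Finset.sum_congr rfl fun p _ => mul_assoc _ _ _
  · simp

end EPres

open EPres in
theorem e_formal_presentation
    -- c k is the unique series with a_k·1 + b_k·G + c_k·H = g_k (k ≥ 2)
    (c : ℕ → MvPowerSeries (Fin 3) ℂ)
    (hc : ∀ k : ℕ, 2 ≤ k → aP k * 1 + bP k * G + c k * H = gSeries k) :
    -- coefficientwise summability of the three families
    (∀ d : Fin 3 →₀ ℕ,
      {k : ℕ | 2 ≤ k ∧ MvPowerSeries.coeff d (((q k k : ℂ))⁻¹ • aP k) ≠ 0}.Finite) ∧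
    (∀ d : Fin 3 →₀ ℕ,
      {k : ℕ | 2 ≤ k ∧ MvPowerSeries.coeff d (((q k k : ℂ))⁻¹ • bP k) ≠ 0}.Finite) ∧
    (∀ d : Fin 3 →₀ ℕ,
      {k : ℕ | 2 ≤ k ∧ MvPowerSeries.coeff d (((q k k : ℂ))⁻¹ • c k) ≠ 0}.Finite) ∧
    -- the coefficientwise sums give a presentation of e
    ∃ a b cc : MvPowerSeries (Fin 3) ℂ,
      (∀ d : Fin 3 →₀ ℕ, MvPowerSeries.coeff d a =
        ∑' k : ℕ, if 2 ≤ k then ((q k k : ℂ))⁻¹ * MvPowerSeries.coeff d (aP k) else 0) ∧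
      (∀ d : Fin 3 →₀ ℕ, MvPowerSeries.coeff d b =
        ∑' k : ℕ, if 2 ≤ k then ((q k k : ℂ))⁻¹ * MvPowerSeries.coeff d (bP k) else 0) ∧
      (∀ d : Fin 3 →₀ ℕ, MvPowerSeries.coeff d cc =
        ∑' k : ℕ, if 2 ≤ k then ((q k k : ℂ))⁻¹ * MvPowerSeries.coeff d (c k) else 0) ∧
      DependsOnXY a ∧ DependsOnXY b ∧
      eS = a * 1 + b * G + cc * H := by
  classical
  -- basic vanishing lemmas for large k
  have haz : ∀ (d : Fin 3 →₀ ℕ) k, deg d + 2 ≤ k → MvPowerSeries.coeff d (aP k) = 0 := by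
    intro d k hk
    by_contra h
    obtain ⟨hz, hs⟩ := aP_supp k d h
    simp only [deg] at hk
    omega
  have hbz : ∀ (d : Fin 3 →₀ ℕ) k, deg d + 2 ≤ k → MvPowerSeries.coeff d (bP k) = 0 := by
    intro d k hk
    by_contra h
    obtain ⟨hz, hs⟩ := bP_supp k d h
    simp only [deg] at hk
    omega
  have hbGz : ∀ (d : Fin 3 →₀ ℕ) k, deg d + 2 ≤ k → MvPowerSeries.coeff d (bP k * G) = 0 := by
    intro d k hk
    by_contra h
    have := bPG_supp k d h
    omega
  have hcz : ∀ (d : Fin 3 →₀ ℕ) k, deg d + 2 ≤ k → MvPowerSeries.coeff d (c k) = 0 := by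
    intro d k hk
    exact c_supp c hc k (by omega) d (by omega)
  have hcHz : ∀ (d : Fin 3 →₀ ℕ) k, deg d + 2 ≤ k → MvPowerSeries.coeff d (c k * H) = 0 := by
    intro d k hk
    rw [MvPowerSeries.coeff_mul]
    refine Finset.sum_eq_zero fun p hp => ?_
    have hd : p.1 + p.2 = d := Finset.HasAntidiagonal.mem_antidiagonal.mp hp
    have hdd : deg p.1 + deg p.2 = deg d := by rw [← deg_add, hd]
    rw [hcz p.1 k (by omega), zero_mul]
  -- summability helper
  have hsum_of : ∀ (f : ℕ → ℂ) (N : ℕ), (∀ k, N ≤ k → f k = 0) → Summable f := by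
    intro f N h
    exact summable_of_ne_finset_zero (s := Finset.range N)
      (fun k hk => h k (by simpa using hk))
  -- finiteness of the three families
  have hfin : ∀ (F : ℕ → MvPowerSeries (Fin 3) ℂ)
      (hF : ∀ (p : Fin 3 →₀ ℕ) k, deg p + 2 ≤ k → MvPowerSeries.coeff p (F k) = 0)
      (d : Fin 3 →₀ ℕ),
      {k : ℕ | 2 ≤ k ∧ MvPowerSeries.coeff d (((q k k : ℂ))⁻¹ • F k) ≠ 0}.Finite := by
    intro F hF d
    refine Set.Finite.subset (Finset.range (deg d + 2)).finite_toSet fun k hk => ?_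
    simp only [Set.mem_setOf_eq, MvPowerSeries.coeff_smul] at hk
    simp only [Finset.coe_range, Set.mem_Iio]
    by_contra hlt
    push_neg at hlt
    exact hk.2 (by rw [hF d k (by omega), mul_zero])
  refine ⟨hfin aP haz, hfin bP hbz, hfin c hcz, ?_⟩
  refine ⟨sumS aP, sumS bP, sumS c,
    fun d => rfl, fun d => rfl, fun d => rfl, ?_, ?_, ?_⟩
  · -- DependsOnXY a
    intro d h
    by_contra h2
    apply h
    rw [coeff_sumS]
    refine (tsum_congr (g := fun _ => (0 : ℂ)) fun k => ?_).trans tsum_zero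
    split
    · rcases eq_or_ne (MvPowerSeries.coeff d (aP k)) 0 with hz | hz
      · rw [hz, mul_zero]
      · exact absurd (aP_supp k d hz).1 h2
    · rfl
  · -- DependsOnXY b
    intro d h
    by_contra h2
    apply h
    rw [coeff_sumS]
    refine (tsum_congr (g := fun _ => (0 : ℂ)) fun k => ?_).trans tsum_zero
    split
    · rcases eq_or_ne (MvPowerSeries.coeff d (bP k)) 0 with hz | hz
      · rw [hz, mul_zero]
      · exact absurd (bP_supp k d hz).1 h2
    · rfl
  · -- the presentation
    apply MvPowerSeries.ext
    intro d
    rw [map_add, map_add, mul_one, coeff_sumS_mul bP hbz G d, coeff_sumS_mul c hcz H d, coeff_sumS]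
    rw [← Summable.tsum_add (summable_if aP haz d) (summable_if (fun k => bP k * G) hbGz d),
      ← Summable.tsum_add ((summable_if aP haz d).add (summable_if (fun k => bP k * G) hbGz d))
        (summable_if (fun k => c k * H) hcHz d)]
    have hcollect : ∀ k : ℕ,
        ((if 2 ≤ k then ((q k k : ℂ))⁻¹ * MvPowerSeries.coeff d (aP k) else 0) +
          (if 2 ≤ k then ((q k k : ℂ))⁻¹ * MvPowerSeries.coeff d (bP k * G) else 0) +
          (if 2 ≤ k then ((q k k : ℂ))⁻¹ * MvPowerSeries.coeff d (c k * H) else 0))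
        = if 2 ≤ k then ((q k k : ℂ))⁻¹ * MvPowerSeries.coeff d (gSeries k) else 0 := by
      intro k
      split
      · rename_i hk
        rw [← hc k hk, map_add, map_add, mul_one]
        ring
      · simp
    rw [tsum_congr hcollect]
    rw [tsum_eq_single (d 0) ?side]
    case side =>
      intro k hk
      split
      · rw [MvPowerSeries.coeff_apply]
        unfold gSeries
        rw [if_neg (fun hcon => hk hcon.1.symm), mul_zero]
      · rfl
    rw [MvPowerSeries.coeff_apply, MvPowerSeries.coeff_apply]
    unfold eS gSeries
    by_cases h1 : 2 ≤ d 0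
    · by_cases h2 : d 1 = 0 ∧ d 0 ≤ d 2
      · rw [if_pos ⟨h1, h2⟩, if_pos h1, if_pos ⟨rfl, h2⟩]
        rw [Rat.cast_div, div_eq_mul_inv, mul_comm]
      · rw [if_neg (fun hcon => h2 ⟨hcon.2.1, hcon.2.2⟩), if_pos h1,
          if_neg (fun hcon => h2 ⟨hcon.2.1, hcon.2.2⟩), mul_zero]
    · rw [if_neg (fun hcon => h1 hcon.1), if_neg h1]
end
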